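/- arXiv:2304.04555 — 3 statements merged into one kernel-verified Lean document; each statement's English description precedes it below -/
import Mathlib

section
/- The derivative of a B-spline curve of order k is a B-spline curve of order k-1 with coefficients given by scaled differences: on [t_r, t_s], D(Σ_{j=r-k+1}^{s-1} α_j B_{j,k,t}) = Σ_{j=r-k+2}^{s-1} (k-1)·(α_j - α_{j-1})/(t_{j+k-1} - t_j) · B_{j,k-1,t}. -/
/-- Cox–de Boor recursion: `Bspl t k j` is the `j`-th non-uniform B-spline of
order `k` for the knot sequence `t` (order 1 is the indicator of `[t j, t (j+1))`). -/
noncomputable def Bspl (t : ℤ → ℝ) : ℕ → ℤ → ℝ → ℝ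
  | 0, _, _ => 0
  | 1, j, x => if t j ≤ x ∧ x < t (j + 1) then 1 else 0
  | (k + 2), j, x =>
      (x - t j) / (t (j + (k : ℤ) + 1) - t j) * Bspl t (k + 1) j x
      + (t (j + (k : ℤ) + 2) - x) / (t (j + (k : ℤ) + 2) - t (j + 1)) * Bspl t (k + 1) (j + 1) x

lemma Bspl_zero_of_ge (t : ℤ → ℝ) (ht : Monotone t) :
    ∀ (m : ℕ) (j : ℤ) (x : ℝ), t (j + (m : ℤ)) ≤ x → Bspl t m j x = 0 := by
  intro m
  induction m using Nat.strong_induction_on with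
  | _ m ih =>
    match m with
    | 0 => intro j x h; rfl
    | 1 =>
      intro j x h
      push_cast at h
      simp only [Bspl, ite_eq_right_iff, one_ne_zero]
      rintro ⟨-, h2⟩; linarith
    | (k+2) =>
      intro j x h
      push_cast at h
      have h1 : t (j + ((k+1 : ℕ) : ℤ)) ≤ x := le_trans (ht (by push_cast; omega)) h
      have h2 : t ((j+1) + ((k+1 : ℕ) : ℤ)) ≤ x := le_trans (ht (by push_cast; omega)) h
      simp only [Bspl, ih (k+1) (by omega) j x h1, ih (k+1) (by omega) (j+1) x h2]
      ring

lemma Bspl_zero_of_lt (t : ℤ → ℝ) (ht : Monotone t) :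
    ∀ (m : ℕ) (j : ℤ) (x : ℝ), x < t j → Bspl t m j x = 0 := by
  intro m
  induction m using Nat.strong_induction_on with
  | _ m ih =>
    match m with
    | 0 => intro j x h; rfl
    | 1 =>
      intro j x h
      simp only [Bspl, ite_eq_right_iff, one_ne_zero]
      rintro ⟨h1, -⟩; linarith
    | (k+2) =>
      intro j x h
      have h2 : x < t (j+1) := lt_of_lt_of_le h (ht (by omega))
      simp only [Bspl, ih (k+1) (by omega) j x h, ih (k+1) (by omega) (j+1) x h2]
      ring

lemma Bspl_one_loc (t : ℤ → ℝ) (j : ℤ) (x : ℝ) (h1 : x ≠ t j) (h2 : x ≠ t (j+1)) :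
    ∀ᶠ y in nhds x, Bspl t 1 j y = Bspl t 1 j x := by
  rcases lt_or_gt_of_ne h1 with h | h
  · filter_upwards [eventually_lt_nhds h] with y hy
    simp [Bspl, not_le.2 hy, not_le.2 h]
  · rcases lt_or_gt_of_ne h2 with h' | h'
    · filter_upwards [eventually_gt_nhds h, eventually_lt_nhds h'] with y hy1 hy2
      simp [Bspl, hy1.le, hy2, h.le, h']
    · filter_upwards [eventually_gt_nhds h'] with y hy
      simp [Bspl, not_lt.2 hy.le, not_lt.2 h'.le]

set_option maxHeartbeats 1000000 in
lemma hasDerivAt_Bspl (t : ℤ → ℝ) (ht : StrictMono t) :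
    ∀ (k : ℕ) (j : ℤ) (x : ℝ), (∀ i, x ≠ t i) →
    HasDerivAt (Bspl t (k+2) j)
      (((k : ℝ)+1) * (Bspl t (k+1) j x / (t (j + (k : ℤ) + 1) - t j)
             - Bspl t (k+1) (j+1) x / (t (j + (k : ℤ) + 2) - t (j+1)))) x := by
  intro k
  induction k with
  | zero =>
    intro j x hknot
    have hf : HasDerivAt (fun y => (y - t j) / (t (j + ((0:ℕ) : ℤ) + 1) - t j) * Bspl t 1 j x
        + (t (j + ((0:ℕ) : ℤ) + 2) - y) / (t (j + ((0:ℕ) : ℤ) + 2) - t (j+1)) * Bspl t 1 (j+1) x)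
        (1 / (t (j + ((0:ℕ) : ℤ) + 1) - t j) * Bspl t 1 j x
          + (0 - 1) / (t (j + ((0:ℕ) : ℤ) + 2) - t (j+1)) * Bspl t 1 (j+1) x) x := by
      exact ((((hasDerivAt_id x).sub_const (t j)).div_const _).mul_const _).add
        ((((hasDerivAt_const x (t (j + ((0:ℕ) : ℤ) + 2))).sub (hasDerivAt_id x)).div_const _).mul_const _)
    have heq : Bspl t (0+2) j =ᶠ[nhds x] (fun y => (y - t j) / (t (j + ((0:ℕ) : ℤ) + 1) - t j) * Bspl t 1 j x
        + (t (j + ((0:ℕ) : ℤ) + 2) - y) / (t (j + ((0:ℕ) : ℤ) + 2) - t (j+1)) * Bspl t 1 (j+1) x) := by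
      filter_upwards [Bspl_one_loc t j x (hknot j) (hknot (j+1)),
        Bspl_one_loc t (j+1) x (hknot (j+1)) (hknot (j+1+1))] with y e1 e2
      rw [← e1, ← e2]
      simp only [Bspl]
    refine (hf.congr_of_eventuallyEq heq).congr_deriv ?_
    push_cast
    ring
  | succ n ih =>
    intro j x hknot
    have nz : ∀ (a b : ℤ), a < b → t b - t a ≠ 0 := fun a b h => sub_ne_zero.2 (ht h).ne'
    have hB1 := ih j x hknot
    have hB2 := ih (j+1) x hknot
    have hf1 : HasDerivAt (fun y => (y - t j) / (t (j + ((n+1:ℕ) : ℤ) + 1) - t j))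
        (1 / (t (j + ((n+1:ℕ) : ℤ) + 1) - t j)) x :=
      ((hasDerivAt_id x).sub_const _).div_const _
    have hf2 : HasDerivAt (fun y => (t (j + ((n+1:ℕ) : ℤ) + 2) - y) / (t (j + ((n+1:ℕ) : ℤ) + 2) - t (j+1)))
        ((0 - 1) / (t (j + ((n+1:ℕ) : ℤ) + 2) - t (j+1))) x :=
      ((hasDerivAt_const x _).sub (hasDerivAt_id x)).div_const _
    have hsum := (hf1.mul hB1).add (hf2.mul hB2)
    have heq : Bspl t (n+1+2) j = (fun y => (y - t j) / (t (j + ((n+1:ℕ) : ℤ) + 1) - t j) * Bspl t (n+2) j y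
        + (t (j + ((n+1:ℕ) : ℤ) + 2) - y) / (t (j + ((n+1:ℕ) : ℤ) + 2) - t (j+1)) * Bspl t (n+2) (j+1) y) := by
      funext y
      simp only [Bspl]
    rw [heq]
    refine hsum.congr_deriv ?_
    -- algebraic identity
    have hord : Bspl t (n+1+1) = Bspl t (n+2) := by norm_num
    have E1 : Bspl t (n+2) j x = (x - t j) / (t (j + (n : ℤ) + 1) - t j) * Bspl t (n+1) j x
        + (t (j + (n : ℤ) + 2) - x) / (t (j + (n : ℤ) + 2) - t (j+1)) * Bspl t (n+1) (j+1) x := by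
      simp only [Bspl]
    have E2 : Bspl t (n+2) (j+1) x = (x - t (j+1)) / (t (j+1 + (n : ℤ) + 1) - t (j+1)) * Bspl t (n+1) (j+1) x
        + (t (j+1 + (n : ℤ) + 2) - x) / (t (j+1 + (n : ℤ) + 2) - t (j+1+1)) * Bspl t (n+1) (j+1+1) x := by
      simp only [Bspl]
    have i1 : j + 1 + (n:ℤ) + 1 = j + (n:ℤ) + 2 := by ring
    have i2 : j + 1 + (n:ℤ) + 2 = j + (n:ℤ) + 3 := by ring
    have i3 : (j : ℤ) + 1 + 1 = j + 2 := by ring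
    rw [hord, E1, E2, i1, i2, i3]
    push_cast
    have i4 : j + ((n:ℤ) + 1) + 1 = j + (n:ℤ) + 2 := by ring
    have i5 : j + ((n:ℤ) + 1) + 2 = j + (n:ℤ) + 3 := by ring
    rw [i4, i5]
    have d1 : t (j + (n:ℤ) + 1) - t j ≠ 0 := nz _ _ (by omega)
    have d2 : t (j + (n:ℤ) + 2) - t (j+1) ≠ 0 := nz _ _ (by omega)
    have d3 : t (j + (n:ℤ) + 3) - t (j+2) ≠ 0 := nz _ _ (by omega)
    have D1 : t (j + (n:ℤ) + 2) - t j ≠ 0 := nz _ _ (by omega)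
    have D2 : t (j + (n:ℤ) + 3) - t (j+1) ≠ 0 := nz _ _ (by omega)
    field_simp
    ring

/-- Derivative of a B-spline curve of order `k` is a B-spline curve of order `k-1`
with scaled-difference coefficients, on the interior of `[t r, t s]` away from knots. -/
theorem stmt5 (t : ℤ → ℝ) (ht : StrictMono t) (k : ℕ) (hk : 3 ≤ k) (r s : ℤ)
    (hrs : r + (k : ℤ) ≤ s) (α : ℤ → ℝ) (x : ℝ) (hx : x ∈ Set.Ioo (t r) (t s))
    (hknot : ∀ j : ℤ, x ≠ t j) :
    deriv (fun y => ∑ j ∈ Finset.Icc (r - (k : ℤ) + 1) (s - 1), α j * Bspl t k j y) x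
      = ∑ j ∈ Finset.Icc (r - (k : ℤ) + 2) (s - 1),
          ((k : ℝ) - 1) * (α j - α (j - 1)) / (t (j + (k : ℤ) - 1) - t j)
            * Bspl t (k - 1) j x := by
  obtain ⟨m, rfl⟩ : ∃ m, k = m + 3 := ⟨k - 3, by omega⟩
  obtain ⟨hx1, hx2⟩ := hx
  have hmono := ht.monotone
  -- derivative of the sum
  have hder : HasDerivAt
      (fun y => ∑ j ∈ Finset.Icc (r - ((m+3:ℕ) : ℤ) + 1) (s - 1), α j * Bspl t (m+3) j y)
      (∑ j ∈ Finset.Icc (r - ((m+3:ℕ) : ℤ) + 1) (s - 1),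
        α j * ((((m+1:ℕ) : ℝ) + 1) * (Bspl t (m+2) j x / (t (j + ((m+1:ℕ) : ℤ) + 1) - t j)
          - Bspl t (m+2) (j+1) x / (t (j + ((m+1:ℕ) : ℤ) + 2) - t (j+1))))) x := by
    apply HasDerivAt.fun_sum
    intro j _
    exact (hasDerivAt_Bspl t ht (m+1) j x hknot).const_mul (α j)
  rw [hder.deriv]
  -- split each term
  have key : ∀ j : ℤ, α j * ((((m+1:ℕ) : ℝ) + 1) * (Bspl t (m+2) j x / (t (j + ((m+1:ℕ) : ℤ) + 1) - t j)
      - Bspl t (m+2) (j+1) x / (t (j + ((m+1:ℕ) : ℤ) + 2) - t (j+1))))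
    = ((m:ℝ)+2) * α j * Bspl t (m+2) j x / (t (j + (m:ℤ) + 2) - t j)
      - ((m:ℝ)+2) * α j * Bspl t (m+2) (j+1) x / (t (j + (m:ℤ) + 3) - t (j+1)) := by
    intro j
    have e1 : j + ((m+1:ℕ) : ℤ) + 1 = j + (m:ℤ) + 2 := by push_cast; ring
    have e2 : j + ((m+1:ℕ) : ℤ) + 2 = j + (m:ℤ) + 3 := by push_cast; ring
    rw [e1, e2]
    push_cast
    ring
  rw [Finset.sum_congr rfl (fun j _ => key j), Finset.sum_sub_distrib]
  -- reindex the second sum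
  have hS2 : ∑ j ∈ Finset.Icc (r - ((m+3:ℕ) : ℤ) + 1) (s-1),
        ((m:ℝ)+2) * α j * Bspl t (m+2) (j+1) x / (t (j + (m:ℤ) + 3) - t (j+1))
      = ∑ j ∈ Finset.Icc (r - ((m+3:ℕ) : ℤ) + 2) s,
        ((m:ℝ)+2) * α (j-1) * Bspl t (m+2) j x / (t (j + (m:ℤ) + 2) - t j) := by
    apply Finset.sum_nbij' (fun a => a + 1) (fun b => b - 1)
    · intro a ha; simp only [Finset.mem_Icc] at *; omega
    · intro b hb; simp only [Finset.mem_Icc] at *; omega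
    · intro a _; ring
    · intro b _; ring
    · intro a _
      have e1 : a + 1 + (m:ℤ) + 2 = a + (m:ℤ) + 3 := by ring
      have e2 : a + 1 - 1 = a := by ring
      rw [e1, e2]
  rw [hS2]
  -- drop the vanishing boundary terms
  have hz1 : Bspl t (m+2) (r - ((m+3:ℕ) : ℤ) + 1) x = 0 := by
    apply Bspl_zero_of_ge t hmono (m+2) _ x
    rw [show r - ((m+3:ℕ) : ℤ) + 1 + ((m+2:ℕ) : ℤ) = r by push_cast; ring]
    exact hx1.le
  have hz2 : Bspl t (m+2) s x = 0 := Bspl_zero_of_lt t hmono (m+2) s x hx2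
  have hb1 : ∑ j ∈ Finset.Icc (r - ((m+3:ℕ) : ℤ) + 2) (s-1),
        ((m:ℝ)+2) * α j * Bspl t (m+2) j x / (t (j + (m:ℤ) + 2) - t j)
      = ∑ j ∈ Finset.Icc (r - ((m+3:ℕ) : ℤ) + 1) (s-1),
        ((m:ℝ)+2) * α j * Bspl t (m+2) j x / (t (j + (m:ℤ) + 2) - t j) := by
    apply Finset.sum_subset
    · intro a; simp only [Finset.mem_Icc]; omega
    · intro a ha ha'
      simp only [Finset.mem_Icc] at ha ha'
      have : a = r - ((m+3:ℕ) : ℤ) + 1 := by omega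
      subst this
      rw [hz1]; ring
  have hb2 : ∑ j ∈ Finset.Icc (r - ((m+3:ℕ) : ℤ) + 2) (s-1),
        ((m:ℝ)+2) * α (j-1) * Bspl t (m+2) j x / (t (j + (m:ℤ) + 2) - t j)
      = ∑ j ∈ Finset.Icc (r - ((m+3:ℕ) : ℤ) + 2) s,
        ((m:ℝ)+2) * α (j-1) * Bspl t (m+2) j x / (t (j + (m:ℤ) + 2) - t j) := by
    apply Finset.sum_subset
    · intro a; simp only [Finset.mem_Icc]; omega
    · intro a ha ha'
      simp only [Finset.mem_Icc] at ha ha'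
      have : a = s := by omega
      subst this
      rw [hz2]; ring
  rw [← hb1, ← hb2, ← Finset.sum_sub_distrib]
  apply Finset.sum_congr rfl
  intro j _
  have e1 : (m + 3 - 1 : ℕ) = m + 2 := by omega
  have e2 : j + ((m+3:ℕ) : ℤ) - 1 = j + (m:ℤ) + 2 := by push_cast; ring
  rw [e1, e2]
  push_cast
  ring
end

section
/- Sufficient condition for bi-Lipschitz non-uniform B-spline transformations: Let k ≥ 3, r + k ≤ s, t strictly increasing knots, and f(x) = Σ_{j=r-k+1}^{s-1} α_j B_{j,k,t}(x). If for all j = r-k+2, ..., s-1 it holds that l/(k-1) < (α_j - α_{j-1})/(t_{j+k-1} - t_j) < u/(k-1), where 0 < l < 1 < u, then l < f'(x) < u for all x in [t_r, t_s] (wherever f' exists). -/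
lemma Bspl_support (t : ℤ → ℝ) (ht : StrictMono t) (k : ℕ) :
    ∀ j : ℤ, ∀ x : ℝ, (x < t j → Bspl t k j x = 0) ∧ (t (j + (k:ℤ)) ≤ x → Bspl t k j x = 0) := by
  induction k using Nat.twoStepInduction with
  | zero => intro j x; exact ⟨fun _ => rfl, fun _ => rfl⟩
  | one =>
    intro j x
    constructor
    · intro h
      show (if t j ≤ x ∧ x < t (j + 1) then (1:ℝ) else 0) = 0
      rw [if_neg]; rintro ⟨h1, -⟩; linarith
    · intro h
      show (if t j ≤ x ∧ x < t (j + 1) then (1:ℝ) else 0) = 0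
      rw [if_neg]; rintro ⟨-, h2⟩; push_cast at h; linarith
  | more k ih ih2 =>
    intro j x
    have e : Bspl t (k+2) j x =
      (x - t j) / (t (j + (k : ℤ) + 1) - t j) * Bspl t (k + 1) j x
      + (t (j + (k : ℤ) + 2) - x) / (t (j + (k : ℤ) + 2) - t (j + 1)) * Bspl t (k + 1) (j + 1) x := rfl
    constructor
    · intro h
      rw [e, ((ih2 j x).1 h), ((ih2 (j+1) x).1 (by have := ht (show j < j+1 by omega); linarith)),
        mul_zero, mul_zero, add_zero]
    · intro h
      push_cast at h
      rw [show j + ((k:ℤ) + 2) = j + (k:ℤ) + 2 from by ring] at h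
      have h1 : t (j + ((k:ℤ)+1)) ≤ x := by
        have := ht (show j + ((k:ℤ)+1) < j + (k:ℤ) + 2 by omega); linarith
      have h2 : t (j + 1 + ((k:ℤ)+1)) ≤ x := by
        have : j + 1 + ((k:ℤ)+1) = j + (k:ℤ) + 2 := by ring
        rw [this]; exact h
      rw [e, (ih2 j x).2 (by push_cast; exact h1), (ih2 (j+1) x).2 (by push_cast; exact h2),
        mul_zero, mul_zero, add_zero]

lemma Bspl_nonneg (t : ℤ → ℝ) (ht : StrictMono t) (k : ℕ) :
    ∀ j : ℤ, ∀ x : ℝ, 0 ≤ Bspl t k j x := by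
  induction k using Nat.twoStepInduction with
  | zero => intro j x; exact le_refl 0
  | one => intro j x; show (0:ℝ) ≤ if _ then 1 else 0; positivity
  | more k ih ih2 =>
    intro j x
    have e : Bspl t (k+2) j x =
      (x - t j) / (t (j + (k : ℤ) + 1) - t j) * Bspl t (k + 1) j x
      + (t (j + (k : ℤ) + 2) - x) / (t (j + (k : ℤ) + 2) - t (j + 1)) * Bspl t (k + 1) (j + 1) x := rfl
    rw [e]
    have d1 : 0 < t (j + (k : ℤ) + 1) - t j := by
      have := ht (show j < j + (k:ℤ) + 1 by omega); linarith
    have d2 : 0 < t (j + (k : ℤ) + 2) - t (j+1) := by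
      have := ht (show j + 1 < j + (k:ℤ) + 2 by omega); linarith
    apply add_nonneg
    · rcases le_or_gt (t j) x with h | h
      · exact mul_nonneg (div_nonneg (by linarith) d1.le) (ih2 j x)
      · rw [(Bspl_support t ht (k+1) j x).1 h, mul_zero]
    · rcases le_or_gt x (t (j + (k : ℤ) + 2)) with h | h
      · exact mul_nonneg (div_nonneg (by linarith) d2.le) (ih2 (j+1) x)
      · have hz : Bspl t (k+1) (j+1) x = 0 := by
          apply (Bspl_support t ht (k+1) (j+1) x).2
          push_cast
          have e2 : j+1+((k:ℤ)+1) = j + (k:ℤ)+2 := by ring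
          rw [e2]; linarith
        rw [hz, mul_zero]

lemma Bspl_partition (t : ℤ → ℝ) (ht : StrictMono t) (k : ℕ) :
    ∀ m : ℤ, ∀ x : ℝ, t m ≤ x → x < t (m+1) →
      ∑ j ∈ Finset.Icc (m - (k:ℤ)) m, Bspl t (k+1) j x = 1 := by
  induction k with
  | zero =>
    intro m x h1 h2
    simp only [Nat.cast_zero, sub_zero, Finset.Icc_self, Finset.sum_singleton]
    show (if t m ≤ x ∧ x < t (m + 1) then (1:ℝ) else 0) = 1
    rw [if_pos ⟨h1, h2⟩]
  | succ k ih =>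
    intro m x h1 h2
    have hsub : ∀ j : ℤ, j ≤ m - (k:ℤ) - 1 → Bspl t (k+1) j x = 0 := by
      intro j hj
      apply (Bspl_support t ht (k+1) j x).2
      have : t (j + ((k:ℤ)+1)) ≤ t m := by
        rcases eq_or_lt_of_le (show j + ((k:ℤ)+1) ≤ m by omega) with h | h
        · rw [h]
        · exact (ht h).le
      push_cast; linarith
    have hsup : ∀ j : ℤ, m + 1 ≤ j → Bspl t (k+1) j x = 0 := by
      intro j hj
      apply (Bspl_support t ht (k+1) j x).1
      have : t (m+1) ≤ t j := by
        rcases eq_or_lt_of_le hj with h | h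
        · rw [h]
        · exact (ht h).le
      linarith
    set φ : ℤ → ℝ := fun j => (x - t j) / (t (j + (k : ℤ) + 1) - t j) * Bspl t (k + 1) j x with hφ
    set ψ : ℤ → ℝ := fun j => (t (j + (k : ℤ) + 1) - x) / (t (j + (k : ℤ) + 1) - t j) * Bspl t (k + 1) j x with hψ
    have step : ∀ j : ℤ, Bspl t (k+2) j x = φ j + ψ (j+1) := by
      intro j
      have : Bspl t (k+2) j x =
        (x - t j) / (t (j + (k : ℤ) + 1) - t j) * Bspl t (k + 1) j x
        + (t (j + (k : ℤ) + 2) - x) / (t (j + (k : ℤ) + 2) - t (j + 1)) * Bspl t (k + 1) (j + 1) x := rfl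
      rw [this, hφ, hψ]
      simp only []
      rw [show j + 1 + (k:ℤ) + 1 = j + (k:ℤ) + 2 from by ring]
    calc ∑ j ∈ Finset.Icc (m - ((k:ℤ)+1)) m, Bspl t (k+2) j x
        = ∑ j ∈ Finset.Icc (m - (k:ℤ) - 1) m, (φ j + ψ (j+1)) := by
          rw [show m - ((k:ℤ)+1) = m - (k:ℤ) - 1 from by ring]
          exact Finset.sum_congr rfl (fun j _ => step j)
      _ = ∑ j ∈ Finset.Icc (m - (k:ℤ) - 1) m, φ j
          + ∑ j ∈ Finset.Icc (m - (k:ℤ)) (m+1), ψ j := by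
          rw [Finset.sum_add_distrib]
          congr 1
          rw [show Finset.Icc (m - (k:ℤ)) (m+1) = (Finset.Icc (m - (k:ℤ) - 1) m).map
            (addRightEmbedding 1) from by rw [Finset.map_add_right_Icc]; ring_nf,
            Finset.sum_map]
          rfl
      _ = ∑ j ∈ Finset.Icc (m - (k:ℤ) - 1) (m+1), φ j
          + ∑ j ∈ Finset.Icc (m - (k:ℤ) - 1) (m+1), ψ j := by
          congr 1
          · apply Finset.sum_subset (Finset.Icc_subset_Icc_right (by omega))
            intro j hj hj2
            simp only [Finset.mem_Icc] at hj hj2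
            have : j = m + 1 := by omega
            rw [hφ]; simp only []
            rw [hsup j (by omega), mul_zero]
          · apply Finset.sum_subset (Finset.Icc_subset_Icc_left (by omega))
            intro j hj hj2
            simp only [Finset.mem_Icc] at hj hj2
            have : j = m - (k:ℤ) - 1 := by omega
            rw [hψ]; simp only []
            rw [hsub j (by omega), mul_zero]
      _ = ∑ j ∈ Finset.Icc (m - (k:ℤ) - 1) (m+1), Bspl t (k+1) j x := by
          rw [← Finset.sum_add_distrib]
          apply Finset.sum_congr rfl
          intro j hj
          rw [hφ, hψ]; simp only []
          have hd : t (j + (k:ℤ) + 1) - t j ≠ 0 := by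
            have := ht (show j < j + (k:ℤ) + 1 by omega); linarith
          field_simp
          ring
      _ = ∑ j ∈ Finset.Icc (m - (k:ℤ)) m, Bspl t (k+1) j x := by
          symm
          apply Finset.sum_subset (Finset.Icc_subset_Icc (by omega) (by omega))
          intro j hj hj2
          simp only [Finset.mem_Icc] at hj hj2
          rcases (show j = m - (k:ℤ) - 1 ∨ j = m + 1 by omega) with h | h
          · exact hsub j (by omega)
          · exact hsup j (by omega)
      _ = 1 := ih m x h1 h2

set_option maxHeartbeats 1000000 in
lemma alg (K x a0 a1 a2 b1 b2 b3 B0 B1 B2 : ℝ)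
    (d1 : b2 - a0 ≠ 0) (d2 : b3 - a1 ≠ 0)
    (d3 : b1 - a0 ≠ 0) (d4 : b2 - a1 ≠ 0) (d5 : b3 - a2 ≠ 0) :
    (K + 1) * (((x - a0)/(b1 - a0)*B0 + (b2 - x)/(b2 - a1)*B1) / (b2 - a0)
      - ((x - a1)/(b2 - a1)*B1 + (b3 - x)/(b3 - a2)*B2) / (b3 - a1))
    = 1/(b2 - a0) * ((x - a0)/(b1 - a0)*B0 + (b2 - x)/(b2 - a1)*B1)
      + (x - a0)/(b2 - a0) * (K * (B0/(b1 - a0) - B1/(b2 - a1)))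
      + (-1/(b3 - a1) * ((x - a1)/(b2 - a1)*B1 + (b3 - x)/(b3 - a2)*B2)
      + (b3 - x)/(b3 - a1) * (K * (B1/(b2 - a1) - B2/(b3 - a2)))) := by
  field_simp
  ring

lemma Bspl_one_locConst (t : ℤ → ℝ) (ht : StrictMono t) (j m : ℤ) (x y : ℝ)
    (h1 : t m < x) (h2 : x < t (m+1)) (h3 : t m < y) (h4 : y < t (m+1)) :
    Bspl t 1 j y = Bspl t 1 j x := by
  have key : ∀ z : ℝ, t m < z → z < t (m+1) → ((t j ≤ z ∧ z < t (j+1)) ↔ (j ≤ m ∧ m ≤ j)) := by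
    intro z hz1 hz2
    constructor
    · rintro ⟨ha, hb⟩
      constructor
      · by_contra h
        have : t (m+1) ≤ t j := by
          rcases eq_or_lt_of_le (show m + 1 ≤ j by omega) with h | h
          · rw [h]
          · exact (ht h).le
        linarith
      · by_contra h
        have : t (j+1) ≤ t m := by
          rcases eq_or_lt_of_le (show j + 1 ≤ m by omega) with h | h
          · rw [h]
          · exact (ht h).le
        linarith
    · rintro ⟨ha, hb⟩
      have : j = m := by omega
      subst this
      exact ⟨hz1.le, hz2⟩
  show (if t j ≤ y ∧ y < t (j+1) then (1:ℝ) else 0) = (if t j ≤ x ∧ x < t (j+1) then (1:ℝ) else 0)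
  rw [if_congr ((key y h3 h4).trans (key x h1 h2).symm) rfl rfl]

set_option maxHeartbeats 1000000 in
lemma Bspl_hasDerivAt (t : ℤ → ℝ) (ht : StrictMono t) (k : ℕ) :
    ∀ j m : ℤ, ∀ x : ℝ, t m < x → x < t (m+1) →
      HasDerivAt (fun y => Bspl t (k+1) j y)
        ((k:ℝ) * (Bspl t k j x / (t (j + (k:ℤ)) - t j)
          - Bspl t k (j+1) x / (t (j + (k:ℤ) + 1) - t (j+1)))) x := by
  induction k with
  | zero =>
    intro j m x h1 h2
    have : HasDerivAt (fun y => Bspl t 1 j y) 0 x := by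
      apply (hasDerivAt_const x (Bspl t 1 j x)).congr_of_eventuallyEq
      filter_upwards [Ioo_mem_nhds h1 h2] with y hy
      exact Bspl_one_locConst t ht j m x y h1 h2 hy.1 hy.2
    convert this using 1
    push_cast; ring
  | succ k ih =>
    intro j m x h1 h2
    have e : ∀ y : ℝ, Bspl t (k+2) j y =
      (y - t j) / (t (j + (k : ℤ) + 1) - t j) * Bspl t (k + 1) j y
      + (t (j + (k : ℤ) + 2) - y) / (t (j + (k : ℤ) + 2) - t (j + 1)) * Bspl t (k + 1) (j + 1) y :=
      fun y => rfl
    have hA : HasDerivAt (fun y : ℝ => (y - t j) / (t (j + (k : ℤ) + 1) - t j))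
        (1 / (t (j + (k : ℤ) + 1) - t j)) x := by
      simpa using ((hasDerivAt_id x).sub_const (t j)).div_const (t (j + (k : ℤ) + 1) - t j)
    have hB : HasDerivAt (fun y : ℝ => (t (j + (k : ℤ) + 2) - y) / (t (j + (k : ℤ) + 2) - t (j+1)))
        (-1 / (t (j + (k : ℤ) + 2) - t (j+1))) x := by
      simpa using ((hasDerivAt_const x (t (j + (k : ℤ) + 2))).sub (hasDerivAt_id x)).div_const
        (t (j + (k : ℤ) + 2) - t (j+1))
    have hD := (hA.mul (ih j m x h1 h2)).add (hB.mul (ih (j+1) m x h1 h2))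
    have hD' : HasDerivAt (fun y => Bspl t (k+2) j y)
        (1 / (t (j + (k : ℤ) + 1) - t j) * Bspl t (k+1) j x
          + (x - t j) / (t (j + (k : ℤ) + 1) - t j) *
            ((k:ℝ) * (Bspl t k j x / (t (j + (k:ℤ)) - t j)
              - Bspl t k (j+1) x / (t (j + (k:ℤ) + 1) - t (j+1))))
          + (-1 / (t (j + (k : ℤ) + 2) - t (j+1)) * Bspl t (k+1) (j+1) x
          + (t (j + (k : ℤ) + 2) - x) / (t (j + (k : ℤ) + 2) - t (j+1)) *
            ((k:ℝ) * (Bspl t k (j+1) x / (t (j + 1 + (k:ℤ)) - t (j+1))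
              - Bspl t k (j+1+1) x / (t (j + 1 + (k:ℤ) + 1) - t (j+1+1)))))) x := by
      apply hD.congr_of_eventuallyEq
      filter_upwards with y
      exact e y
    convert hD' using 1
    have d1 : t (j + (k:ℤ) + 1) - t j ≠ 0 :=
      sub_ne_zero.2 (ne_of_gt (ht (by omega)))
    have d2 : t (j + (k:ℤ) + 2) - t (j+1) ≠ 0 :=
      sub_ne_zero.2 (ne_of_gt (ht (by omega)))
    rcases k with _ | n
    · push_cast
      simp only [show j + (0:ℤ) + 1 = j + 1 from by ring, show j + (0:ℤ) + 2 = j + 2 from by ring,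
        show j + 1 + (0:ℤ) + 1 = j + 2 from by ring, show j + (0:ℤ) = j from by ring,
        show j + 1 + (0:ℤ) = j + 1 from by ring, show j + 1 + 1 = j + 2 from by ring]
      ring
    · -- k = n+1, expand order n+2 B-splines at x
      have d3 : t (j + (n:ℤ) + 1) - t j ≠ 0 := sub_ne_zero.2 (ne_of_gt (ht (by omega)))
      have d4 : t (j + (n:ℤ) + 2) - t (j+1) ≠ 0 := sub_ne_zero.2 (ne_of_gt (ht (by omega)))
      have d5 : t (j + (n:ℤ) + 3) - t (j+2) ≠ 0 := sub_ne_zero.2 (ne_of_gt (ht (by omega)))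
      push_cast
      simp only [show ∀ c : ℤ, j + ((n:ℤ) + c) = j + (n:ℤ) + c from fun c => by ring,
        show ∀ c : ℤ, j + 1 + ((n:ℤ) + c) = j + (n:ℤ) + (1+c) from fun c => by ring,
        show j + 1 + (n:ℤ) + 1 = j + (n:ℤ) + 2 from by ring,
        show j + 1 + (n:ℤ) + 2 = j + (n:ℤ) + 3 from by ring,
        show (1:ℤ) + 1 = 2 from rfl, show (1:ℤ) + 2 = 3 from rfl,
        show j + 1 + 1 = j + 2 from by ring,
        show j + ((n:ℤ) + 1 + 1) = j + (n:ℤ) + 2 from by ring,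
        show j + ((n:ℤ) + 1 + 1) + 1 = j + (n:ℤ) + 3 from by ring,
        show j + (n:ℤ) + 1 + 1 = j + (n:ℤ) + 2 from by ring,
        show j + (n:ℤ) + 1 + 2 = j + (n:ℤ) + 3 from by ring,
        show j + (n:ℤ) + 2 + 1 = j + (n:ℤ) + 3 from by ring]
      have e1 : Bspl t (n+1+1) j x =
        (x - t j) / (t (j + (n : ℤ) + 1) - t j) * Bspl t (n + 1) j x
        + (t (j + (n : ℤ) + 2) - x) / (t (j + (n : ℤ) + 2) - t (j + 1)) * Bspl t (n + 1) (j + 1) x := rfl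
      have e2 : Bspl t (n+1+1) (j+1) x =
        (x - t (j+1)) / (t (j + (n:ℤ) + 2) - t (j+1)) * Bspl t (n + 1) (j+1) x
        + (t (j + (n : ℤ) + 3) - x) / (t (j + (n : ℤ) + 3) - t (j + 2)) * Bspl t (n + 1) (j + 2) x := by
        have : Bspl t (n+1+1) (j+1) x =
          (x - t (j+1)) / (t (j + 1 + (n : ℤ) + 1) - t (j+1)) * Bspl t (n + 1) (j+1) x
          + (t (j + 1 + (n : ℤ) + 2) - x) / (t (j + 1 + (n : ℤ) + 2) - t (j + 1 + 1)) * Bspl t (n + 1) (j + 1 + 1) x := rfl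
        rw [this, show j + 1 + (n:ℤ) + 1 = j + (n:ℤ) + 2 from by ring,
          show j + 1 + (n:ℤ) + 2 = j + (n:ℤ) + 3 from by ring,
          show j + 1 + 1 = j + 2 from by ring]
      rw [e1, e2]
      have h1' : t (j + (n:ℤ) + 2) - t j ≠ 0 := sub_ne_zero.2 (ne_of_gt (ht (by omega)))
      have h2' : t (j + (n:ℤ) + 3) - t (j+1) ≠ 0 := sub_ne_zero.2 (ne_of_gt (ht (by omega)))
      exact alg ((n:ℝ)+1) x (t j) (t (j+1)) (t (j+2)) (t (j+(n:ℤ)+1)) (t (j+(n:ℤ)+2))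
        (t (j+(n:ℤ)+3)) (Bspl t (n+1) j x) (Bspl t (n+1) (j+1) x) (Bspl t (n+1) (j+2) x)
        h1' h2' d3 d4 d5

lemma Bspl_two_eq (t : ℤ → ℝ) (ht : StrictMono t) (j : ℤ) (x : ℝ) :
    Bspl t 2 j x = max 0 (min ((x - t j) / (t (j+1) - t j)) ((t (j+2) - x) / (t (j+2) - t (j+1)))) := by
  have hab : t j < t (j+1) := ht (by omega)
  have hbc : t (j+1) < t (j+2) := ht (by omega)
  have e : Bspl t 2 j x =
      (x - t j) / (t (j + 1) - t j) * Bspl t 1 j x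
      + (t (j + 2) - x) / (t (j + 2) - t (j + 1)) * Bspl t 1 (j + 1) x := by
    have : Bspl t 2 j x =
      (x - t j) / (t (j + (0:ℤ) + 1) - t j) * Bspl t 1 j x
      + (t (j + (0:ℤ) + 2) - x) / (t (j + (0:ℤ) + 2) - t (j + 1)) * Bspl t 1 (j + 1) x := rfl
    rw [this, show j + (0:ℤ) + 1 = j + 1 from by ring, show j + (0:ℤ) + 2 = j + 2 from by ring]
  have e1 : Bspl t 1 j x = if t j ≤ x ∧ x < t (j+1) then (1:ℝ) else 0 := rfl
  have e2 : Bspl t 1 (j+1) x = if t (j+1) ≤ x ∧ x < t (j+1+1) then (1:ℝ) else 0 := rfl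
  rw [e, e1, e2, show j + 1 + 1 = j + 2 from by ring]
  rcases lt_or_ge x (t j) with h1 | h1
  · rw [if_neg (by rintro ⟨h,-⟩; linarith), if_neg (by rintro ⟨h,-⟩; linarith)]
    rw [max_eq_left]
    · ring
    · exact (min_le_left _ _).trans (le_of_lt (div_neg_of_neg_of_pos (by linarith) (by linarith)))
  · rcases lt_or_ge x (t (j+1)) with h2 | h2
    · rw [if_pos ⟨h1, h2⟩, if_neg (by rintro ⟨h,-⟩; linarith)]
      rw [min_eq_left, max_eq_right]
      · ring
      · exact div_nonneg (by linarith) (by linarith)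
      · rw [div_le_div_iff₀ (by linarith) (by linarith)]
        nlinarith
    · rcases lt_or_ge x (t (j+2)) with h3 | h3
      · rw [if_neg (by rintro ⟨-,h⟩; linarith), if_pos ⟨h2, h3⟩]
        rw [min_eq_right, max_eq_right]
        · ring
        · exact div_nonneg (by linarith) (by linarith)
        · rw [div_le_div_iff₀ (by linarith) (by linarith)]
          nlinarith
      · rw [if_neg (by rintro ⟨-,h⟩; linarith), if_neg (by rintro ⟨-,h⟩; linarith)]
        rw [max_eq_left]
        · ring
        · exact (min_le_right _ _).trans (div_nonpos_of_nonpos_of_nonneg (by linarith) (by linarith))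
  -- note: last bullet uses nonpos
lemma Bspl_cont (t : ℤ → ℝ) (ht : StrictMono t) : ∀ n : ℕ, ∀ j : ℤ, Continuous (fun x => Bspl t (n+2) j x) := by
  intro n
  induction n with
  | zero =>
    intro j
    have : (fun x => Bspl t 2 j x) = fun x =>
        max 0 (min ((x - t j) / (t (j+1) - t j)) ((t (j+2) - x) / (t (j+2) - t (j+1)))) := by
      funext x; exact Bspl_two_eq t ht j x
    rw [this]
    exact continuous_const.max (((continuous_id.sub continuous_const).div_const _).min
      ((continuous_const.sub continuous_id).div_const _))
  | succ n ih =>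
    intro j
    have e : (fun x => Bspl t (n+1+2) j x) = fun x =>
      (x - t j) / (t (j + ((n+1:ℕ) : ℤ) + 1) - t j) * Bspl t (n + 2) j x
      + (t (j + ((n+1:ℕ) : ℤ) + 2) - x) / (t (j + ((n+1:ℕ) : ℤ) + 2) - t (j + 1)) * Bspl t (n + 2) (j + 1) x := rfl
    rw [e]
    exact (((continuous_id.sub continuous_const).div_const _).mul (ih j)).add
      (((continuous_const.sub continuous_id).div_const _).mul (ih (j+1)))

lemma partition_big (t : ℤ → ℝ) (ht : StrictMono t) (K : ℕ) (hK : 1 ≤ K)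
    (r s m : ℤ) (hrm : r ≤ m) (hms : m ≤ s - 1) (x : ℝ) (h1 : t m ≤ x) (h2 : x < t (m+1)) :
    ∑ j ∈ Finset.Icc (r - (K:ℤ) + 1) (s-1), Bspl t K j x = 1 := by
  have base : ∑ j ∈ Finset.Icc (m - (K:ℤ) + 1) m, Bspl t K j x = 1 := by
    have := Bspl_partition t ht (K-1) m x h1 h2
    rw [show (K-1) + 1 = K from by omega] at this
    rw [show m - (K:ℤ) + 1 = m - ((K-1 : ℕ) : ℤ) from by push_cast [Nat.cast_sub hK]; ring]
    exact this
  rw [← base]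
  symm
  apply Finset.sum_subset (Finset.Icc_subset_Icc (by omega) (by omega))
  intro j hj hj2
  simp only [Finset.mem_Icc] at hj hj2
  rcases (show j ≤ m - (K:ℤ) ∨ m + 1 ≤ j by omega) with h | h
  · apply (Bspl_support t ht K j x).2
    have : t (j + (K:ℤ)) ≤ t m := by
      rcases eq_or_lt_of_le (show j + (K:ℤ) ≤ m by omega) with h' | h'
      · rw [h']
      · exact (ht h').le
    linarith
  · apply (Bspl_support t ht K j x).1
    have : t (m+1) ≤ t j := by
      rcases eq_or_lt_of_le h with h' | h'
      · rw [h']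
      · exact (ht h').le
    linarith

lemma f_hasDerivAt (t : ℤ → ℝ) (ht : StrictMono t) (K : ℕ) (r s m : ℤ) (α : ℤ → ℝ)
    (hrm : r ≤ m) (hms : m ≤ s - 1) (x : ℝ) (h1 : t m < x) (h2 : x < t (m+1)) :
    HasDerivAt (fun y => ∑ j ∈ Finset.Icc (r - (K:ℤ)) (s-1), α j * Bspl t (K+1) j y)
      (∑ j ∈ Finset.Icc (r - (K:ℤ) + 1) (s-1),
        ((K:ℝ) * ((α j - α (j-1)) / (t (j + (K:ℤ)) - t j))) * Bspl t K j x) x := by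
  have hd : HasDerivAt (fun y => ∑ j ∈ Finset.Icc (r - (K:ℤ)) (s-1), α j * Bspl t (K+1) j y)
      (∑ j ∈ Finset.Icc (r - (K:ℤ)) (s-1),
        α j * ((K:ℝ) * (Bspl t K j x / (t (j + (K:ℤ)) - t j)
          - Bspl t K (j+1) x / (t (j + (K:ℤ) + 1) - t (j+1))))) x :=
    HasDerivAt.fun_sum (fun j _ => (Bspl_hasDerivAt t ht K j m x h1 h2).const_mul (α j))
  convert hd using 1
  have hzero_lo : ∀ j : ℤ, j + (K:ℤ) ≤ m → Bspl t K j x = 0 := by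
    intro j hj
    apply (Bspl_support t ht K j x).2
    have : t (j + (K:ℤ)) ≤ t m := by
      rcases eq_or_lt_of_le hj with h' | h'
      · rw [h']
      · exact (ht h').le
    linarith
  have hzero_hi : ∀ j : ℤ, m + 1 ≤ j → Bspl t K j x = 0 := by
    intro j hj
    apply (Bspl_support t ht K j x).1
    have : t (m+1) ≤ t j := by
      rcases eq_or_lt_of_le hj with h' | h'
      · rw [h']
      · exact (ht h').le
    linarith
  have split : ∀ j ∈ Finset.Icc (r - (K:ℤ)) (s-1),
      α j * ((K:ℝ) * (Bspl t K j x / (t (j + (K:ℤ)) - t j)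
        - Bspl t K (j+1) x / (t (j + (K:ℤ) + 1) - t (j+1))))
      = (K:ℝ) * α j * (Bspl t K j x / (t (j + (K:ℤ)) - t j))
        - (K:ℝ) * α j * (Bspl t K (j+1) x / (t (j + 1 + (K:ℤ)) - t (j+1))) := by
    intro j _
    rw [show j + 1 + (K:ℤ) = j + (K:ℤ) + 1 from by ring]
    ring
  rw [Finset.sum_congr rfl split, Finset.sum_sub_distrib]
  have reidx : ∑ j ∈ Finset.Icc (r - (K:ℤ)) (s-1),
      (K:ℝ) * α j * (Bspl t K (j+1) x / (t (j + 1 + (K:ℤ)) - t (j+1)))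
      = ∑ j ∈ Finset.Icc (r - (K:ℤ) + 1) s,
      (K:ℝ) * α (j-1) * (Bspl t K j x / (t (j + (K:ℤ)) - t j)) := by
    rw [show Finset.Icc (r - (K:ℤ) + 1) s = (Finset.Icc (r - (K:ℤ)) (s-1)).map
      (addRightEmbedding 1) from by rw [Finset.map_add_right_Icc]; congr 1; ring,
      Finset.sum_map]
    apply Finset.sum_congr rfl
    intro j _
    simp only [addRightEmbedding_apply, add_sub_cancel_right]
  rw [reidx]
  have e1 : ∑ j ∈ Finset.Icc (r - (K:ℤ)) (s-1),
      (K:ℝ) * α j * (Bspl t K j x / (t (j + (K:ℤ)) - t j))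
      = ∑ j ∈ Finset.Icc (r - (K:ℤ) + 1) (s-1),
      (K:ℝ) * α j * (Bspl t K j x / (t (j + (K:ℤ)) - t j)) := by
    symm
    apply Finset.sum_subset (Finset.Icc_subset_Icc_left (by omega))
    intro j hj hj2
    simp only [Finset.mem_Icc] at hj hj2
    rw [hzero_lo j (by omega)]
    simp
  have e2 : ∑ j ∈ Finset.Icc (r - (K:ℤ) + 1) s,
      (K:ℝ) * α (j-1) * (Bspl t K j x / (t (j + (K:ℤ)) - t j))
      = ∑ j ∈ Finset.Icc (r - (K:ℤ) + 1) (s-1),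
      (K:ℝ) * α (j-1) * (Bspl t K j x / (t (j + (K:ℤ)) - t j)) := by
    symm
    apply Finset.sum_subset (Finset.Icc_subset_Icc_right (by omega))
    intro j hj hj2
    simp only [Finset.mem_Icc] at hj hj2
    rw [hzero_hi j (by omega)]
    simp
  rw [e1, e2, ← Finset.sum_sub_distrib]
  apply Finset.sum_congr rfl
  intro j _
  ring

/-- Sufficient condition for bi-Lipschitz non-uniform B-spline transformations:
bounded scaled coefficient differences give `l < f' < u` on `[t r, t s]`. -/
theorem stmt6 (t : ℤ → ℝ) (ht : StrictMono t) (k : ℕ) (hk : 3 ≤ k) (r s : ℤ)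
    (hrs : r + (k : ℤ) ≤ s) (α : ℤ → ℝ) (l u : ℝ) (hl : 0 < l) (hl1 : l < 1) (hu : 1 < u)
    (hcond : ∀ j ∈ Finset.Icc (r - (k : ℤ) + 2) (s - 1),
      l / ((k : ℝ) - 1) < (α j - α (j - 1)) / (t (j + (k : ℤ) - 1) - t j) ∧
      (α j - α (j - 1)) / (t (j + (k : ℤ) - 1) - t j) < u / ((k : ℝ) - 1)) :
    ∀ x ∈ Set.Icc (t r) (t s),
      DifferentiableAt ℝ
        (fun y => ∑ j ∈ Finset.Icc (r - (k : ℤ) + 1) (s - 1), α j * Bspl t k j y) x →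
      l < deriv (fun y => ∑ j ∈ Finset.Icc (r - (k : ℤ) + 1) (s - 1), α j * Bspl t k j y) x ∧
      deriv (fun y => ∑ j ∈ Finset.Icc (r - (k : ℤ) + 1) (s - 1), α j * Bspl t k j y) x < u := by
  obtain ⟨K, rfl⟩ : ∃ K, k = K + 1 := ⟨k - 1, by omega⟩
  have hK2 : 2 ≤ K := by omega
  have hKpos : (0:ℝ) < (K:ℝ) := by
    have : (0:ℕ) < K := by omega
    exact_mod_cast this
  have hrsK : r + (K:ℤ) + 1 ≤ s := by push_cast at hrs; omega
  have hset : r - (((K+1:ℕ)):ℤ) + 1 = r - (K:ℤ) := by push_cast; ring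
  have hset2 : r - (((K+1:ℕ)):ℤ) + 2 = r - (K:ℤ) + 1 := by push_cast; ring
  simp only [hset] at *
  rw [hset2] at hcond
  set f : ℝ → ℝ := fun y => ∑ j ∈ Finset.Icc (r - (K:ℤ)) (s-1), α j * Bspl t (K+1) j y with hf
  set c : ℤ → ℝ := fun j => (K:ℝ) * ((α j - α (j-1)) / (t (j + (K:ℤ)) - t j)) with hc
  have hne : (Finset.Icc (r - (K:ℤ) + 1) (s-1)).Nonempty := by
    refine ⟨r - (K:ℤ) + 1, ?_⟩
    simp only [Finset.mem_Icc]
    omega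
  set l' : ℝ := (Finset.Icc (r - (K:ℤ) + 1) (s-1)).inf' hne c with hl'
  set u' : ℝ := (Finset.Icc (r - (K:ℤ) + 1) (s-1)).sup' hne c with hu'
  have hcond' : ∀ j ∈ Finset.Icc (r - (K:ℤ) + 1) (s-1), l < c j ∧ c j < u := by
    intro j hj
    obtain ⟨ha, hb⟩ := hcond j hj
    have hcast : ((K+1:ℕ):ℝ) - 1 = (K:ℝ) := by push_cast; ring
    have hidx : j + (((K+1:ℕ)):ℤ) - 1 = j + (K:ℤ) := by push_cast; ring
    rw [hcast, hidx] at ha hb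
    constructor
    · have := (div_lt_iff₀ hKpos).1 ha
      rw [hc]
      calc l < (α j - α (j-1)) / (t (j + (K:ℤ)) - t j) * (K:ℝ) := this
        _ = (K:ℝ) * ((α j - α (j-1)) / (t (j + (K:ℤ)) - t j)) := by ring
    · have := (lt_div_iff₀ hKpos).1 hb
      rw [hc]
      calc (K:ℝ) * ((α j - α (j-1)) / (t (j + (K:ℤ)) - t j))
          = (α j - α (j-1)) / (t (j + (K:ℤ)) - t j) * (K:ℝ) := by ring
        _ < u := this
  have hll' : l < l' := by
    rw [hl', Finset.lt_inf'_iff]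
    exact fun j hj => (hcond' j hj).1
  have hu'u : u' < u := by
    rw [hu', Finset.sup'_lt_iff]
    exact fun j hj => (hcond' j hj).2
  have hl'u' : ∀ j ∈ Finset.Icc (r - (K:ℤ) + 1) (s-1), l' ≤ c j ∧ c j ≤ u' :=
    fun j hj => ⟨Finset.inf'_le c hj, Finset.le_sup' c hj⟩
  have hcont : Continuous f := by
    apply continuous_finset_sum
    intro j _
    apply continuous_const.mul
    have := Bspl_cont t ht (K-1) j
    rwa [show K - 1 + 2 = K + 1 from by omega] at this
  -- bound for the derivative expression
  have hg : ∀ m : ℤ, r ≤ m → m ≤ s - 1 → ∀ z : ℝ, t m < z → z < t (m+1) →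
      l' ≤ (∑ j ∈ Finset.Icc (r - (K:ℤ) + 1) (s-1), c j * Bspl t K j z) ∧
      (∑ j ∈ Finset.Icc (r - (K:ℤ) + 1) (s-1), c j * Bspl t K j z) ≤ u' := by
    intro m hrm hms z h1 h2
    have hpart := partition_big t ht K (by omega) r s m hrm hms z h1.le h2
    constructor
    · calc l' = ∑ j ∈ Finset.Icc (r - (K:ℤ) + 1) (s-1), l' * Bspl t K j z := by
            rw [← Finset.mul_sum, hpart, mul_one]
        _ ≤ ∑ j ∈ Finset.Icc (r - (K:ℤ) + 1) (s-1), c j * Bspl t K j z :=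
            Finset.sum_le_sum (fun j hj =>
              mul_le_mul_of_nonneg_right (hl'u' j hj).1 (Bspl_nonneg t ht K j z))
    · calc (∑ j ∈ Finset.Icc (r - (K:ℤ) + 1) (s-1), c j * Bspl t K j z)
          ≤ ∑ j ∈ Finset.Icc (r - (K:ℤ) + 1) (s-1), u' * Bspl t K j z :=
            Finset.sum_le_sum (fun j hj =>
              mul_le_mul_of_nonneg_right (hl'u' j hj).2 (Bspl_nonneg t ht K j z))
        _ = u' := by rw [← Finset.mul_sum, hpart, mul_one]
  have localstep : ∀ m : ℤ, r ≤ m → m ≤ s - 1 → ∀ x y : ℝ, t m ≤ x → x ≤ y → y ≤ t (m+1) →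
      l' * (y - x) ≤ f y - f x ∧ f y - f x ≤ u' * (y - x) := by
    intro m hrm hms x y hx hxy hy
    rcases eq_or_lt_of_le hxy with h | h
    · subst h; constructor <;> simp
    · obtain ⟨c₀, hc₀, hslope⟩ := exists_hasDerivAt_eq_slope f
        (fun z => ∑ j ∈ Finset.Icc (r - (K:ℤ) + 1) (s-1), c j * Bspl t K j z) h
        hcont.continuousOn
        (fun z hz => by
          have := f_hasDerivAt t ht K r s m α hrm hms z
            (lt_of_le_of_lt hx hz.1) (lt_of_lt_of_le hz.2 hy)
          exact this)
      have hb := hg m hrm hms c₀ (lt_of_le_of_lt hx hc₀.1) (lt_of_lt_of_le hc₀.2 hy)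
      rw [hslope] at hb
      constructor
      · have := (le_div_iff₀ (by linarith : (0:ℝ) < y - x)).1 hb.1
        linarith
      · have := (div_le_iff₀ (by linarith : (0:ℝ) < y - x)).1 hb.2
        linarith
  have glob : ∀ n : ℕ, ∀ x y : ℝ, t r ≤ x → x ≤ y → y ≤ t s → y ≤ t (r + (n:ℤ)) →
      l' * (y - x) ≤ f y - f x ∧ f y - f x ≤ u' * (y - x) := by
    intro n
    induction n with
    | zero =>
      intro x y hx hxy hys hyn
      rw [show r + ((0:ℕ):ℤ) = r from by push_cast; ring] at hyn
      have : x = y := le_antisymm hxy (by linarith)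
      subst this
      constructor <;> simp
    | succ n ihn =>
      intro x y hx hxy hys hyn
      rw [show r + (((n+1:ℕ)):ℤ) = r + (n:ℤ) + 1 from by push_cast; ring] at hyn
      rcases le_or_gt y (t (r + (n:ℤ))) with hcase | hcase
      · exact ihn x y hx hxy hys hcase
      · have hrns : r + (n:ℤ) ≤ s - 1 := by
          have h1 : t (r + (n:ℤ)) < t s := lt_of_lt_of_le hcase hys
          have := ht.lt_iff_lt.1 h1
          omega
        rcases le_or_gt (t (r + (n:ℤ))) x with hx' | hx'
        · exact localstep (r + (n:ℤ)) (by omega) hrns x y hx' hxy hyn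
        · have htrs : t (r + (n:ℤ)) ≤ t s := (ht.le_iff_le).2 (by omega)
          have hIH := ihn x (t (r + (n:ℤ))) hx hx'.le htrs (le_refl _)
          have hloc := localstep (r + (n:ℤ)) (by omega) hrns (t (r + (n:ℤ))) y
            (le_refl _) hcase.le hyn
          have e1 : l' * (y - x) = l' * (t (r + (n:ℤ)) - x) + l' * (y - t (r + (n:ℤ))) := by ring
          have e2 : u' * (y - x) = u' * (t (r + (n:ℤ)) - x) + u' * (y - t (r + (n:ℤ))) := by ring
          constructor
          · rw [e1]; linarith [hIH.1, hloc.1]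
          · rw [e2]; linarith [hIH.2, hloc.2]
  have claim : ∀ x y : ℝ, t r ≤ x → x ≤ y → y ≤ t s →
      l' * (y - x) ≤ f y - f x ∧ f y - f x ≤ u' * (y - x) := by
    intro x y h1 h2 h3
    refine glob (s - r).toNat x y h1 h2 h3 ?_
    rw [show r + (((s - r).toNat):ℤ) = s from by omega]
    exact h3
  intro x hx hdiff
  have hd : HasDerivAt f (deriv f x) x := hdiff.hasDerivAt
  suffices h : l' ≤ deriv f x ∧ deriv f x ≤ u' by
    exact ⟨lt_of_lt_of_le hll' h.1, lt_of_le_of_lt h.2 hu'u⟩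
  have hrs' : t r < t s := ht (by omega)
  rcases lt_or_eq_of_le hx.2 with hxs | hxs
  · have htend : Filter.Tendsto (slope f x) (nhdsWithin x (Set.Ioi x)) (nhds (deriv f x)) :=
      (hasDerivAt_iff_tendsto_slope.1 hd).mono_left
        (nhdsWithin_mono x (fun y hy => Set.mem_compl_singleton_iff.mpr (ne_of_gt hy)))
    have hev : ∀ᶠ y in nhdsWithin x (Set.Ioi x), l' ≤ slope f x y ∧ slope f x y ≤ u' := by
      filter_upwards [Ioc_mem_nhdsGT_of_mem (Set.mem_Ico.2 ⟨le_refl x, hxs⟩)] with y hy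
      have hcl := claim x y hx.1 hy.1.le hy.2
      rw [slope_def_field]
      have hyx : (0:ℝ) < y - x := by linarith [hy.1]
      constructor
      · rw [le_div_iff₀ hyx]; linarith [hcl.1]
      · rw [div_le_iff₀ hyx]; linarith [hcl.2]
    exact ⟨ge_of_tendsto htend (hev.mono fun y h => h.1),
      le_of_tendsto htend (hev.mono fun y h => h.2)⟩
  · have hrx : t r < x := by rw [hxs]; exact hrs'
    have htend : Filter.Tendsto (slope f x) (nhdsWithin x (Set.Iio x)) (nhds (deriv f x)) :=
      (hasDerivAt_iff_tendsto_slope.1 hd).mono_left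
        (nhdsWithin_mono x (fun y hy => Set.mem_compl_singleton_iff.mpr (ne_of_lt hy)))
    have hev : ∀ᶠ y in nhdsWithin x (Set.Iio x), l' ≤ slope f x y ∧ slope f x y ≤ u' := by
      filter_upwards [Ico_mem_nhdsLT_of_mem (Set.mem_Ioc.2 ⟨hrx, le_refl x⟩)] with y hy
      have hcl := claim y x hy.1 hy.2.le hx.2
      rw [slope_def_field, show (f y - f x) / (y - x) = (f x - f y) / (x - y) from by
        rw [← neg_sub (f x) (f y), ← neg_sub x y, neg_div_neg_eq]]
      have hyx : (0:ℝ) < x - y := by linarith [hy.2]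
      constructor
      · rw [le_div_iff₀ hyx]; linarith [hcl.1]
      · rw [div_le_iff₀ hyx]; linarith [hcl.2]
    exact ⟨ge_of_tendsto htend (hev.mono fun y h => h.1),
      le_of_tendsto htend (hev.mono fun y h => h.2)⟩
end

section
/- Periodic boundary matching for B-spline transformations (Theorem 2): Let k ≥ 3, r + k ≤ s, α = {α_j}_{j=r-k+1}^{s-1} and t = {t_j}_{j=r-k+1}^{s+k-1} strictly increasing, and f(x) = Σ_j α_j B_{j,k,t}(x). If α_{s-i} = 1 + α_{r-i} for i = 1, ..., k-1 and t_{s+j} = 1 + t_{r+j} for j = -k+2, ..., k-2, then all derivatives of f of orders m = 1, ..., k-2 agree at the endpoints: f^{(m)}(t_r) = f^{(m)}(t_s). -/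
lemma bspl_zero_of_lt {t : ℤ → ℝ} (ht : StrictMono t) :
    ∀ (n : ℕ) (j : ℤ) (x : ℝ), x < t j → Bspl t n j x = 0
  | 0, j, x, _ => rfl
  | 1, j, x, h => by
      simp only [Bspl]
      rw [if_neg]; rintro ⟨h1, _⟩; exact absurd (lt_of_lt_of_le h h1) (lt_irrefl x)
  | (n + 2), j, x, h => by
      simp only [Bspl]
      rw [bspl_zero_of_lt ht (n+1) j x h,
        bspl_zero_of_lt ht (n+1) (j+1) x (h.trans_le (ht.monotone (by omega)))]
      ring

lemma bspl_zero_of_ge {t : ℤ → ℝ} (ht : StrictMono t) :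
    ∀ (n : ℕ) (j : ℤ) (x : ℝ), t (j + n) ≤ x → Bspl t n j x = 0
  | 0, j, x, _ => rfl
  | 1, j, x, h => by
      simp only [Bspl]
      rw [if_neg]; rintro ⟨_, h2⟩
      exact absurd (lt_of_lt_of_le h2 (by simpa using h)) (lt_irrefl x)
  | (n + 2), j, x, h => by
      simp only [Bspl]
      rw [bspl_zero_of_ge ht (n+1) j x
          (le_trans (ht.monotone (by push_cast; omega)) h),
        bspl_zero_of_ge ht (n+1) (j+1) x (le_trans (le_of_eq (by push_cast; ring_nf)) h)]
      ring

lemma bspl_left_knot {t : ℤ → ℝ} (ht : StrictMono t) (n : ℕ) (hn : 2 ≤ n) (j : ℤ) :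
    Bspl t n j (t j) = 0 := by
  obtain ⟨m, rfl⟩ : ∃ m, n = m + 2 := ⟨n - 2, by omega⟩
  simp only [Bspl]
  rw [bspl_zero_of_lt ht (m+1) (j+1) (t j) (ht (by omega))]
  simp

lemma bspl_shift {t : ℤ → ℝ} {c : ℝ} :
    ∀ (n : ℕ) (j j' : ℤ), (∀ a : ℤ, 0 ≤ a → a ≤ n → t (j' + a) = c + t (j + a)) →
      ∀ x : ℝ, Bspl t n j' (x + c) = Bspl t n j x
  | 0, j, j', _, x => rfl
  | 1, j, j', h, x => by
      simp only [Bspl]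
      have h0 := h 0 le_rfl (by norm_num)
      have h1 := h 1 zero_le_one (by norm_num)
      simp only [add_zero] at h0
      rw [h0, h1]
      congr 1
      simp only [eq_iff_iff, and_congr]
      constructor <;> rintro ⟨u, v⟩ <;> constructor <;> linarith
  | (n + 2), j, j', h, x => by
      simp only [Bspl]
      have h0 := h 0 le_rfl (by push_cast; omega)
      simp only [add_zero] at h0
      have h1 := h 1 zero_le_one (by push_cast; omega)
      have hn1 := h (n+1) (by push_cast; omega) (by push_cast; omega)
      have hn2 := h (n+2) (by push_cast; omega) (by push_cast; omega)
      rw [bspl_shift (n+1) j j' (fun a ha hb => h a ha (by omega)) x,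
        bspl_shift (n+1) (j+1) (j'+1)
          (fun a ha hb => by
            have := h (a+1) (by omega) (by omega)
            convert this using 2 <;> ring) x]
      have e1 : j' + (n:ℤ) + 1 = j' + ((n:ℤ)+1) := by ring
      have e2 : j' + (n:ℤ) + 2 = j' + ((n:ℤ)+2) := by ring
      have e3 : j + (n:ℤ) + 1 = j + ((n:ℤ)+1) := by ring
      have e4 : j + (n:ℤ) + 2 = j + ((n:ℤ)+2) := by ring
      rw [e1, e2, e3, e4, hn1, hn2, h0, h1]
      push_cast
      ring



lemma bspl_two_eq {t : ℤ → ℝ} (ht : StrictMono t) (j : ℤ) (y : ℝ) :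
    Bspl t 2 j y
      = max 0 (min ((y - t j) / (t (j+1) - t j)) ((t (j+2) - y) / (t (j+2) - t (j+1)))) := by
  have hab : t j < t (j+1) := ht (by omega)
  have hbc : t (j+1) < t (j+2) := ht (by omega)
  show (y - t j) / (t (j + (0:ℕ) + 1) - t j) * Bspl t 1 j y
      + (t (j + (0:ℕ) + 2) - y) / (t (j + (0:ℕ) + 2) - t (j + 1)) * Bspl t 1 (j+1) y = _
  have e1 : j + (0:ℕ) + 1 = j + 1 := by push_cast; ring
  have e2 : j + (0:ℕ) + 2 = j + 2 := by push_cast; ring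
  have e3 : (j:ℤ) + 1 + 1 = j + 2 := by ring
  simp only [Bspl, e1, e2, e3]
  rcases lt_or_ge y (t j) with h1 | h1
  · rw [if_neg (by rintro ⟨u,_⟩; linarith), if_neg (by rintro ⟨u,_⟩; linarith)]
    have hd : (y - t j) / (t (j+1) - t j) ≤ 0 :=
      div_nonpos_of_nonpos_of_nonneg (by linarith) (by linarith)
    rw [max_eq_left (le_trans (min_le_left _ _) hd)]; ring
  rcases lt_or_ge y (t (j+1)) with h2 | h2
  · rw [if_pos ⟨h1, h2⟩, if_neg (by rintro ⟨u,_⟩; linarith)]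
    have hlt : (y - t j) / (t (j+1) - t j) ≤ (t (j+2) - y) / (t (j+2) - t (j+1)) :=
      le_trans (le_of_lt ((div_lt_one (by linarith)).2 (by linarith)))
        (le_of_lt ((one_lt_div (by linarith)).2 (by linarith)))
    rw [min_eq_left hlt, max_eq_right (div_nonneg (by linarith) (by linarith))]; ring
  rcases lt_or_ge y (t (j+2)) with h3 | h3
  · rw [if_neg (by rintro ⟨_,v⟩; linarith), if_pos ⟨h2, h3⟩]
    have hle : (t (j+2) - y) / (t (j+2) - t (j+1)) ≤ (y - t j) / (t (j+1) - t j) :=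
      le_trans ((div_le_one (by linarith)).2 (by linarith))
        ((one_le_div (by linarith)).2 (by linarith))
    rw [min_eq_right hle, max_eq_right (div_nonneg (by linarith) (by linarith))]; ring
  · rw [if_neg (by rintro ⟨_,v⟩; linarith), if_neg (by rintro ⟨_,v⟩; linarith)]
    have hd : (t (j+2) - y) / (t (j+2) - t (j+1)) ≤ 0 :=
      div_nonpos_of_nonpos_of_nonneg (by linarith) (by linarith)
    rw [max_eq_left (le_trans (min_le_right _ _) hd)]; ring

lemma bspl_cont {t : ℤ → ℝ} (ht : StrictMono t) :
    ∀ (n : ℕ) (j : ℤ), Continuous (Bspl t (n+2) j)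
  | 0, j => by
      have : Bspl t 2 j = fun y =>
          max 0 (min ((y - t j) / (t (j+1) - t j)) ((t (j+2) - y) / (t (j+2) - t (j+1)))) :=
        funext (bspl_two_eq ht j)
      rw [this]
      exact continuous_const.max
        ((((continuous_id.sub continuous_const).div_const _)).min
          ((continuous_const.sub continuous_id).div_const _))
  | (n+1), j => by
      show Continuous (Bspl t (n+3) j)
      have : Bspl t (n+3) j = fun x =>
          (x - t j) / (t (j + (n+1 : ℕ) + 1) - t j) * Bspl t (n+2) j x
          + (t (j + (n+1 : ℕ) + 2) - x) / (t (j + (n+1 : ℕ) + 2) - t (j + 1))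
            * Bspl t (n+2) (j+1) x := by
        funext x; rfl
      rw [this]
      exact ((((continuous_id.sub continuous_const).div_const _)).mul (bspl_cont ht n j)).add
        ((((continuous_const.sub continuous_id).div_const _)).mul (bspl_cont ht n (j+1)))

open Filter Set Topology in
lemma glue_deriv {f g : ℝ → ℝ} {x : ℝ} (hf : ContinuousAt f x) (hg : ContinuousAt g x)
    (S : Finset ℝ) (h : ∀ y : ℝ, (∀ c ∈ S, y ≠ c) → HasDerivAt f (g y) y) :
    HasDerivAt f (g x) x := by
  classical
  set U : Set ℝ := ⋂ c ∈ (S.erase x), ({c}ᶜ : Set ℝ) with hU_def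
  have hUopen : IsOpen U := isOpen_biInter_finset (fun c _ => isOpen_compl_singleton)
  have hxU : x ∈ U := by
    simp only [hU_def, Set.mem_iInter, Set.mem_compl_iff, Set.mem_singleton_iff]
    intro c hc hxc
    exact (Finset.mem_erase.1 hc).1 hxc.symm
  have hUder : ∀ y ∈ U, y ≠ x → HasDerivAt f (g y) y := by
    intro y hy hyx
    refine h y (fun c hc hyc => ?_)
    by_cases hcx : c = x
    · exact hyx (hyc ▸ hcx)
    · have : y ∈ ({c}ᶜ : Set ℝ) := by
        simp only [hU_def, Set.mem_iInter] at hy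
        exact hy c (Finset.mem_erase.2 ⟨hcx, hc⟩)
      exact this (by simpa using hyc)
  have hUx : U ∈ 𝓝 x := hUopen.mem_nhds hxU
  have A : HasDerivWithinAt f (g x) (Ici x) x := by
    apply hasDerivWithinAt_Ici_of_tendsto_deriv (s := Ioi x ∩ U)
    · intro y hy
      exact ((hUder y hy.2 (ne_of_gt hy.1)).differentiableAt).differentiableWithinAt
    · exact hf.continuousWithinAt
    · exact Filter.inter_mem self_mem_nhdsWithin (mem_nhdsWithin_of_mem_nhds hUx)
    · have hev : ∀ᶠ y in 𝓝[>] x, deriv f y = g y := by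
        filter_upwards [self_mem_nhdsWithin, mem_nhdsWithin_of_mem_nhds hUx] with y hy1 hy2
        exact (hUder y hy2 (ne_of_gt hy1)).deriv
      exact (hg.tendsto.mono_left nhdsWithin_le_nhds).congr' (by filter_upwards [hev] with y hy; exact hy.symm)
  have B : HasDerivWithinAt f (g x) (Iic x) x := by
    apply hasDerivWithinAt_Iic_of_tendsto_deriv (s := Iio x ∩ U)
    · intro y hy
      exact ((hUder y hy.2 (ne_of_lt hy.1)).differentiableAt).differentiableWithinAt
    · exact hf.continuousWithinAt
    · exact Filter.inter_mem self_mem_nhdsWithin (mem_nhdsWithin_of_mem_nhds hUx)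
    · have hev : ∀ᶠ y in 𝓝[<] x, deriv f y = g y := by
        filter_upwards [self_mem_nhdsWithin, mem_nhdsWithin_of_mem_nhds hUx] with y hy1 hy2
        exact (hUder y hy2 (ne_of_lt hy1)).deriv
      exact (hg.tendsto.mono_left nhdsWithin_le_nhds).congr' (by filter_upwards [hev] with y hy; exact hy.symm)
  simpa using B.union A



/-- derivative of an order `n+1` B-spline, as a combination of order `n` B-splines -/
noncomputable def Bd (t : ℤ → ℝ) (n : ℕ) (j : ℤ) (x : ℝ) : ℝ :=
  (n : ℝ) / (t (j + n) - t j) * Bspl t n j x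
    - (n : ℝ) / (t (j + n + 1) - t (j + 1)) * Bspl t n (j + 1) x

open Filter Topology

lemma ind_ev {a b x : ℝ} (hxa : x ≠ a) (hxb : x ≠ b) :
    ∀ᶠ y in 𝓝 x, (if a ≤ y ∧ y < b then (1:ℝ) else 0) = (if a ≤ x ∧ x < b then 1 else 0) := by
  rcases lt_or_gt_of_ne hxa with h | h
  · filter_upwards [eventually_lt_nhds h] with y hy
    rw [if_neg (by rintro ⟨u,_⟩; linarith), if_neg (by rintro ⟨u,_⟩; linarith)]
  · rcases lt_or_gt_of_ne hxb with h2 | h2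
    · filter_upwards [eventually_gt_nhds h, eventually_lt_nhds h2] with y hy1 hy2
      rw [if_pos ⟨le_of_lt hy1, hy2⟩, if_pos ⟨le_of_lt h, h2⟩]
    · filter_upwards [eventually_gt_nhds h2] with y hy
      rw [if_neg (by rintro ⟨_,v⟩; linarith), if_neg (by rintro ⟨_,v⟩; linarith)]

lemma bspl_one_ev {t : ℤ → ℝ} (j : ℤ) {x : ℝ} (h0 : x ≠ t j) (h1 : x ≠ t (j+1)) :
    ∀ᶠ y in 𝓝 x, Bspl t 1 j y = Bspl t 1 j x := by
  have : ∀ y : ℝ, Bspl t 1 j y = if t j ≤ y ∧ y < t (j+1) then (1:ℝ) else 0 := fun y => rfl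
  simp only [this]
  exact ind_ev h0 h1

lemma bspl_two_deriv_off {t : ℤ → ℝ} (j : ℤ) (x : ℝ)
    (h : ∀ i ∈ Finset.Icc j (j + 2), x ≠ t i) :
    HasDerivAt (Bspl t 2 j) (Bd t 1 j x) x := by
  have h0 : x ≠ t j := h j (by simp)
  have h1 : x ≠ t (j+1) := h (j+1) (by simp)
  have h2 : x ≠ t (j+2) := h (j+2) (by simp)
  have hev : Bspl t 2 j =ᶠ[𝓝 x] fun y =>
      (y - t j) / (t (j + (0:ℕ) + 1) - t j) * Bspl t 1 j x
      + (t (j + (0:ℕ) + 2) - y) / (t (j + (0:ℕ) + 2) - t (j + 1)) * Bspl t 1 (j+1) x := by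
    have e1 : j + ((0:ℕ):ℤ) + 1 = j + 1 := by push_cast; ring
    have e2 : j + ((0:ℕ):ℤ) + 2 = j + 2 := by push_cast; ring
    have e3 : (j:ℤ) + 1 + 1 = j + 2 := by ring
    filter_upwards [bspl_one_ev j h0 h1, bspl_one_ev (j+1) (by rw [e3] at *; exact h1) (by rw [e3]; exact h2)]
      with y hy1 hy2
    show (y - t j) / (t (j + (0:ℕ) + 1) - t j) * Bspl t 1 j y
      + (t (j + (0:ℕ) + 2) - y) / (t (j + (0:ℕ) + 2) - t (j + 1)) * Bspl t 1 (j+1) y = _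
    rw [hy1, hy2]
  have hd : HasDerivAt (fun y =>
      (y - t j) / (t (j + (0:ℕ) + 1) - t j) * Bspl t 1 j x
      + (t (j + (0:ℕ) + 2) - y) / (t (j + (0:ℕ) + 2) - t (j + 1)) * Bspl t 1 (j+1) x)
      (Bd t 1 j x) x := by
    have hda : HasDerivAt (fun y : ℝ => (y - t j) / (t (j + (0:ℕ) + 1) - t j) * Bspl t 1 j x)
        (1 / (t (j + (0:ℕ) + 1) - t j) * Bspl t 1 j x) x := by
      simpa using (((hasDerivAt_id x).sub_const (t j)).div_const
        (t (j + (0:ℕ) + 1) - t j)).mul_const (Bspl t 1 j x)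
    have hdb : HasDerivAt (fun y : ℝ =>
        (t (j + (0:ℕ) + 2) - y) / (t (j + (0:ℕ) + 2) - t (j + 1)) * Bspl t 1 (j+1) x)
        (-1 / (t (j + (0:ℕ) + 2) - t (j + 1)) * Bspl t 1 (j+1) x) x := by
      have := (((hasDerivAt_id x).const_sub (t (j + (0:ℕ) + 2))).div_const
        (t (j + (0:ℕ) + 2) - t (j + 1))).mul_const (Bspl t 1 (j+1) x)
      simpa using this
    have := hda.fun_add hdb
    refine this.congr_deriv ?_
    simp only [Bd]
    have e1 : j + ((0:ℕ):ℤ) + 1 = j + 1 := by push_cast; ring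
    have e2 : j + ((0:ℕ):ℤ) + 2 = j + 2 := by push_cast; ring
    have e4 : j + ((1:ℕ):ℤ) = j + 1 := by push_cast; ring
    have e5 : j + ((1:ℕ):ℤ) + 1 = j + 2 := by push_cast; ring
    rw [e1, e2, e5, e4]
    push_cast
    ring
  exact hd.congr_of_eventuallyEq hev

lemma bspl_hasDerivAt_off {t : ℤ → ℝ} (ht : StrictMono t) :
    ∀ (n : ℕ) (j : ℤ) (x : ℝ), (∀ i ∈ Finset.Icc j (j + (n:ℤ) + 2), x ≠ t i) →
      HasDerivAt (Bspl t (n+2) j) (Bd t (n+1) j x) x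
  | 0, j, x, h => bspl_two_deriv_off j x
      (fun i hi => h i (by simp only [Finset.mem_Icc] at *; push_cast; omega))
  | (n+1), j, x, h => by
      have hj : ∀ i ∈ Finset.Icc j (j + (n:ℤ) + 2), x ≠ t i := fun i hi =>
        h i (by simp only [Finset.mem_Icc] at *; push_cast at *; omega)
      have hk : ∀ i ∈ Finset.Icc (j+1) ((j+1) + (n:ℤ) + 2), x ≠ t i := fun i hi =>
        h i (by simp only [Finset.mem_Icc] at *; push_cast at *; omega)
      have ihj := bspl_hasDerivAt_off ht n j x hj
      have ihk := bspl_hasDerivAt_off ht n (j+1) x hk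
      have hu : HasDerivAt (fun y : ℝ => (y - t j) / (t (j + ((n+1:ℕ):ℤ) + 1) - t j))
          (1 / (t (j + ((n+1:ℕ):ℤ) + 1) - t j)) x := by
        simpa using ((hasDerivAt_id x).sub_const (t j)).div_const _
      have hv : HasDerivAt (fun y : ℝ =>
            (t (j + ((n+1:ℕ):ℤ) + 2) - y) / (t (j + ((n+1:ℕ):ℤ) + 2) - t (j + 1)))
          ((-1) / (t (j + ((n+1:ℕ):ℤ) + 2) - t (j + 1))) x := by
        have := ((hasDerivAt_id x).const_sub (t (j + ((n+1:ℕ):ℤ) + 2))).div_const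
          (t (j + ((n+1:ℕ):ℤ) + 2) - t (j + 1))
        simpa using this
      have hprod := (hu.fun_mul ihj).fun_add (hv.fun_mul ihk)
      have feq : (fun y => (y - t j) / (t (j + ((n+1:ℕ):ℤ) + 1) - t j) * Bspl t (n+2) j y
          + (t (j + ((n+1:ℕ):ℤ) + 2) - y) / (t (j + ((n+1:ℕ):ℤ) + 2) - t (j + 1))
            * Bspl t (n+2) (j+1) y) = Bspl t (n+1+2) j := by
        funext y; rfl
      rw [feq] at hprod
      rw [show j + ((n+1:ℕ):ℤ) + 1 = j + (n:ℤ) + 2 from by push_cast; ring,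
        show j + ((n+1:ℕ):ℤ) + 2 = j + (n:ℤ) + 3 from by push_cast; ring] at hprod
      have exj : Bspl t (n+2) j x
          = (x - t j) / (t (j + (n:ℤ) + 1) - t j) * Bspl t (n+1) j x
            + (t (j + (n:ℤ) + 2) - x) / (t (j + (n:ℤ) + 2) - t (j+1)) * Bspl t (n+1) (j+1) x :=
        rfl
      have exk : Bspl t (n+2) (j+1) x
          = (x - t (j+1)) / (t (j + (n:ℤ) + 2) - t (j+1)) * Bspl t (n+1) (j+1) x
            + (t (j + (n:ℤ) + 3) - x) / (t (j + (n:ℤ) + 3) - t (j+2)) * Bspl t (n+1) (j+2) x := by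
        rw [show j + (n:ℤ) + 2 = j + 1 + (n:ℤ) + 1 from by ring,
          show j + (n:ℤ) + 3 = j + 1 + (n:ℤ) + 2 from by ring,
          show (j:ℤ) + 2 = j + 1 + 1 from by ring]
        rfl
      have bdj : Bd t (n+1) j x
          = ((n:ℝ)+1) / (t (j + (n:ℤ) + 1) - t j) * Bspl t (n+1) j x
            - ((n:ℝ)+1) / (t (j + (n:ℤ) + 2) - t (j+1)) * Bspl t (n+1) (j+1) x := by
        simp only [Bd]
        rw [show j + ((n+1:ℕ):ℤ) = j + (n:ℤ) + 1 from by push_cast; ring]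
        rw [show j + (n:ℤ) + 1 + 1 = j + (n:ℤ) + 2 from by ring]
        push_cast; ring
      have bdk : Bd t (n+1) (j+1) x
          = ((n:ℝ)+1) / (t (j + (n:ℤ) + 2) - t (j+1)) * Bspl t (n+1) (j+1) x
            - ((n:ℝ)+1) / (t (j + (n:ℤ) + 3) - t (j+2)) * Bspl t (n+1) (j+2) x := by
        simp only [Bd]
        rw [show j + 1 + ((n+1:ℕ):ℤ) = j + (n:ℤ) + 2 from by push_cast; ring]
        rw [show j + (n:ℤ) + 2 + 1 = j + (n:ℤ) + 3 from by ring,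
          show (j:ℤ) + 1 + 1 = j + 2 from by ring]
        push_cast; ring
      have bdgoal : Bd t (n+1+1) j x
          = ((n:ℝ)+2) / (t (j + (n:ℤ) + 2) - t j) * Bspl t (n+2) j x
            - ((n:ℝ)+2) / (t (j + (n:ℤ) + 3) - t (j+1)) * Bspl t (n+2) (j+1) x := by
        simp only [Bd]
        rw [show j + ((n+1+1:ℕ):ℤ) = j + (n:ℤ) + 2 from by push_cast; ring]
        rw [show j + (n:ℤ) + 2 + 1 = j + (n:ℤ) + 3 from by ring]
        simp only [show n+1+1 = n+2 from rfl]
        push_cast; ring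
      rw [exj, exk, bdj, bdk] at hprod
      have goal_eq : Bd t (n+1+1) j x
          = 1 / (t (j + (n:ℤ) + 2) - t j)
              * ((x - t j) / (t (j + (n:ℤ) + 1) - t j) * Bspl t (n+1) j x
                + (t (j + (n:ℤ) + 2) - x) / (t (j + (n:ℤ) + 2) - t (j+1)) * Bspl t (n+1) (j+1) x)
            + (x - t j) / (t (j + (n:ℤ) + 2) - t j)
              * (((n:ℝ)+1) / (t (j + (n:ℤ) + 1) - t j) * Bspl t (n+1) j x
                - ((n:ℝ)+1) / (t (j + (n:ℤ) + 2) - t (j+1)) * Bspl t (n+1) (j+1) x)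
            + ((-1) / (t (j + (n:ℤ) + 3) - t (j+1))
              * ((x - t (j+1)) / (t (j + (n:ℤ) + 2) - t (j+1)) * Bspl t (n+1) (j+1) x
                + (t (j + (n:ℤ) + 3) - x) / (t (j + (n:ℤ) + 3) - t (j+2)) * Bspl t (n+1) (j+2) x)
            + (t (j + (n:ℤ) + 3) - x) / (t (j + (n:ℤ) + 3) - t (j+1))
              * (((n:ℝ)+1) / (t (j + (n:ℤ) + 2) - t (j+1)) * Bspl t (n+1) (j+1) x
                - ((n:ℝ)+1) / (t (j + (n:ℤ) + 3) - t (j+2)) * Bspl t (n+1) (j+2) x)) := by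
        rw [bdgoal, exj, exk]
        have h1 : t (j + (n:ℤ) + 1) - t j ≠ 0 := sub_ne_zero.mpr (ne_of_gt (ht (by omega)))
        have h2 : t (j + (n:ℤ) + 2) - t (j+1) ≠ 0 := sub_ne_zero.mpr (ne_of_gt (ht (by omega)))
        have h3 : t (j + (n:ℤ) + 2) - t j ≠ 0 := sub_ne_zero.mpr (ne_of_gt (ht (by omega)))
        have h4 : t (j + (n:ℤ) + 3) - t (j+1) ≠ 0 := sub_ne_zero.mpr (ne_of_gt (ht (by omega)))
        have h5 : t (j + (n:ℤ) + 3) - t (j+2) ≠ 0 := sub_ne_zero.mpr (ne_of_gt (ht (by omega)))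
        field_simp
        ring
      rw [goal_eq]
      exact hprod

lemma bd_cont {t : ℤ → ℝ} (ht : StrictMono t) (n : ℕ) (j : ℤ) :
    Continuous (Bd t (n+2) j) := by
  have e : Bd t (n+2) j = fun x => ((n+2:ℕ):ℝ) / (t (j + ((n+2:ℕ):ℤ)) - t j) * Bspl t (n+2) j x
      - ((n+2:ℕ):ℝ) / (t (j + ((n+2:ℕ):ℤ) + 1) - t (j+1)) * Bspl t (n+2) (j+1) x := rfl
  rw [e]
  exact (continuous_const.mul (bspl_cont ht n j)).sub
    (continuous_const.mul (bspl_cont ht n (j+1)))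

lemma bspl_hasDerivAt {t : ℤ → ℝ} (ht : StrictMono t) (n : ℕ) (j : ℤ) (x : ℝ) :
    HasDerivAt (Bspl t (n+3) j) (Bd t (n+2) j x) x := by
  apply glue_deriv ((bspl_cont ht (n+1) j).continuousAt)
    ((bd_cont ht n j).continuousAt) ((Finset.Icc j (j + (n:ℤ) + 3)).image t)
  intro y hy
  have h : ∀ i ∈ Finset.Icc j (j + ((n+1:ℕ):ℤ) + 2), y ≠ t i := by
    intro i hi
    apply hy (t i)
    apply Finset.mem_image_of_mem t
    simp only [Finset.mem_Icc] at *
    push_cast at *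
    omega
  have := bspl_hasDerivAt_off ht (n+1) j y h
  simpa only [show n+1+2 = n+3 from rfl, show n+1+1 = n+2 from rfl] using this

lemma sum_hasDerivAt {t : ℤ → ℝ} (ht : StrictMono t) (n : ℕ) (γ : ℤ → ℝ) (A B : ℤ)
    (hA : γ (A-1) = 0) (hB : γ B = 0) (x : ℝ) :
    HasDerivAt (fun y => ∑ j ∈ Finset.Icc A B, γ j * Bspl t (n+3) j y)
      (∑ j ∈ Finset.Icc A B,
        ((n:ℝ)+2) * (γ j - γ (j-1)) / (t (j + (n:ℤ) + 2) - t j) * Bspl t (n+2) j x) x := by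
  have hd : HasDerivAt (fun y => ∑ j ∈ Finset.Icc A B, γ j * Bspl t (n+3) j y)
      (∑ j ∈ Finset.Icc A B, γ j * Bd t (n+2) j x) x := by
    apply HasDerivAt.fun_sum
    intro j _
    exact (bspl_hasDerivAt ht n j x).const_mul (γ j)
  convert hd using 1
  -- rewrite Bd and reindex
  have bdeq : ∀ j : ℤ, γ j * Bd t (n+2) j x
      = γ j * (((n:ℝ)+2) / (t (j + (n:ℤ) + 2) - t j) * Bspl t (n+2) j x)
        - γ j * (((n:ℝ)+2) / (t (j + (n:ℤ) + 3) - t (j+1)) * Bspl t (n+2) (j+1) x) := by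
    intro j
    simp only [Bd]
    rw [show j + ((n+2:ℕ):ℤ) = j + (n:ℤ) + 2 from by push_cast; ring]
    rw [show j + (n:ℤ) + 2 + 1 = j + (n:ℤ) + 3 from by ring]
    push_cast; ring
  rw [Finset.sum_congr rfl (fun j _ => bdeq j), Finset.sum_sub_distrib]
  have hshift : ∑ j ∈ Finset.Icc A B,
        γ j * (((n:ℝ)+2) / (t (j + (n:ℤ) + 3) - t (j+1)) * Bspl t (n+2) (j+1) x)
      = ∑ j ∈ Finset.Icc (A+1) (B+1),
        γ (j-1) * (((n:ℝ)+2) / (t (j + (n:ℤ) + 2) - t j) * Bspl t (n+2) j x) := by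
    rw [← Finset.map_add_right_Icc A B 1, Finset.sum_map]
    apply Finset.sum_congr rfl
    intro j _
    simp only [addRightEmbedding_apply]
    rw [show j + 1 - 1 = j from by ring, show j + 1 + (n:ℤ) + 2 = j + (n:ℤ) + 3 from by ring]
  rw [hshift]
  set g : ℤ → ℝ := fun j => γ (j-1) * (((n:ℝ)+2) / (t (j + (n:ℤ) + 2) - t j) * Bspl t (n+2) j x)
    with hg
  have hgA : g A = 0 := by simp [hg, hA]
  have hgB : g (B+1) = 0 := by simp only [hg]; rw [show B + 1 - 1 = B from by ring, hB]; ring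
  have hsum2 : ∑ j ∈ Finset.Icc (A+1) (B+1), g j = ∑ j ∈ Finset.Icc A B, g j := by
    rcases le_or_gt A B with hAB | hAB
    · have e1 : Finset.Icc A (B+1) = insert A (Finset.Icc (A+1) (B+1)) := by
        ext i; simp only [Finset.mem_Icc, Finset.mem_insert]; omega
      have e2 : A ∉ Finset.Icc (A+1) (B+1) := by simp only [Finset.mem_Icc]; omega
      have e3 : ∑ j ∈ Finset.Icc A (B+1), g j = g A + ∑ j ∈ Finset.Icc (A+1) (B+1), g j := by
        rw [e1, Finset.sum_insert e2]
      have e4 : ∑ j ∈ Finset.Icc A (B+1), g j = ∑ j ∈ Finset.Icc A B, g j + g (B+1) := by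
        have e5 : Finset.Icc A (B+1) = insert (B+1) (Finset.Icc A B) := by
          ext i; simp only [Finset.mem_Icc, Finset.mem_insert]; omega
        have e6 : B + 1 ∉ Finset.Icc A B := by simp only [Finset.mem_Icc]; omega
        rw [e5, Finset.sum_insert e6, add_comm]
      rw [hgA] at e3; rw [hgB] at e4
      simp only [zero_add, add_zero] at e3 e4
      rw [← e3, e4]
    · rw [Finset.Icc_eq_empty (by omega), Finset.Icc_eq_empty (by omega)]
  rw [hsum2]
  rw [← Finset.sum_sub_distrib]
  apply Finset.sum_congr rfl
  intro j _
  simp only [hg]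
  ring

/-- Periodic boundary matching: if the coefficients and knots satisfy the unit-shift
conditions, then the derivatives of orders `1, …, k-2` of the B-spline curve agree at
the endpoints `t r` and `t s`. -/
theorem stmt11 (t : ℤ → ℝ) (ht : StrictMono t) (k : ℕ) (hk : 3 ≤ k) (r s : ℤ)
    (hrs : r + (k : ℤ) ≤ s) (α : ℤ → ℝ)
    (hα : ∀ i ∈ Finset.Icc (1 : ℤ) ((k : ℤ) - 1), α (s - i) = 1 + α (r - i))
    (htt : ∀ j ∈ Finset.Icc (-(k : ℤ) + 2) ((k : ℤ) - 2), t (s + j) = 1 + t (r + j)) :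
    ∀ m : ℕ, 1 ≤ m → m ≤ k - 2 →
      iteratedDeriv m (fun x => ∑ j ∈ Finset.Icc (r - (k : ℤ) + 1) (s - 1),
          α j * Bspl t k j x) (t r)
        = iteratedDeriv m (fun x => ∑ j ∈ Finset.Icc (r - (k : ℤ) + 1) (s - 1),
          α j * Bspl t k j x) (t s) := by
  intro m hm1 hm2
  set d : ℤ := s - r with hd
  set A : ℤ := r - (k:ℤ) + 1 with hA
  set B : ℤ := s + (k:ℤ) with hB
  set β : ℤ → ℝ := fun j => if j ∈ Finset.Icc (r - (k:ℤ) + 1) (s - 1) then α j else 0 with hβ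
  have hf : (fun x => ∑ j ∈ Finset.Icc (r - (k : ℤ) + 1) (s - 1), α j * Bspl t k j x)
      = (fun x => ∑ j ∈ Finset.Icc A B, β j * Bspl t k j x) := by
    funext x
    have h1 : ∑ j ∈ Finset.Icc (r - (k:ℤ) + 1) (s - 1), α j * Bspl t k j x
        = ∑ j ∈ Finset.Icc (r - (k:ℤ) + 1) (s - 1), β j * Bspl t k j x := by
      apply Finset.sum_congr rfl
      intro j hj
      simp only [hβ, if_pos hj]
    rw [h1]
    apply Finset.sum_subset
    · intro j hj
      simp only [Finset.mem_Icc] at hj ⊢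
      omega
    · intro j hj hj'
      simp only [hβ, if_neg hj']
      ring
  have key : ∀ m' : ℕ, m' ≤ k - 2 → ∃ γ : ℤ → ℝ,
      (iteratedDeriv m' (fun x => ∑ j ∈ Finset.Icc A B, β j * Bspl t k j x)
        = fun x => ∑ j ∈ Finset.Icc A B, γ j * Bspl t (k - m') j x)
      ∧ (∀ j : ℤ, j < r - (k:ℤ) + 1 → γ j = 0)
      ∧ (∀ j : ℤ, s - 1 + (m':ℤ) < j → γ j = 0)
      ∧ (∀ j : ℤ, r - (k:ℤ) + 1 + m' ≤ j → j ≤ r - 1 →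
          γ (j + d) = (if m' = 0 then 1 else 0) + γ j) := by
    intro m'
    induction m' with
    | zero =>
      intro _
      refine ⟨β, by simp [iteratedDeriv_zero], ?_, ?_, ?_⟩
      · intro j hj
        simp only [hβ, Finset.mem_Icc]
        rw [if_neg (by omega)]
      · intro j hj
        simp only [hβ, Finset.mem_Icc]
        rw [if_neg (by omega)]
      · intro j hj1 hj2
        rw [if_pos rfl]
        simp only [hβ, Finset.mem_Icc]
        rw [if_pos (by push_cast at hj1 ⊢; omega), if_pos (by push_cast at hj1 ⊢; omega)]
        have := hα (r - j) (by simp only [Finset.mem_Icc]; push_cast at hj1 ⊢; omega)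
        rw [show s - (r - j) = j + d from by omega, show r - (r - j) = j from by omega] at this
        exact this
    | succ m ih =>
      intro hm'
      obtain ⟨γ, hfun, hsup1, hsup2, hper⟩ := ih (by omega)
      obtain ⟨n, hn⟩ : ∃ n, k - m = n + 3 := ⟨k - m - 3, by omega⟩
      have hkm1 : k - (m+1) = n + 2 := by omega
      set γ' : ℤ → ℝ :=
        fun j => ((n:ℝ)+2) * (γ j - γ (j-1)) / (t (j + (n:ℤ) + 2) - t j) with hγ'
      have hA0 : γ (A - 1) = 0 := hsup1 _ (by omega)
      have hB0 : γ B = 0 := hsup2 _ (by push_cast; omega)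
      refine ⟨γ', ?_, ?_, ?_, ?_⟩
      · funext x
        rw [iteratedDeriv_succ, hfun, hkm1, hn]
        exact (sum_hasDerivAt ht n γ A B hA0 hB0 x).deriv
      · intro j hj
        simp only [hγ']
        rw [hsup1 j (by omega), hsup1 (j-1) (by omega)]
        ring_nf
      · intro j hj
        simp only [hγ']
        rw [hsup2 j (by push_cast at hj ⊢; omega), hsup2 (j-1) (by push_cast at hj ⊢; omega)]
        ring_nf
      · intro j hj1 hj2
        rw [if_neg (by omega)]
        have e1 : γ (j + d) = (if m = 0 then 1 else 0) + γ j :=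
          hper j (by push_cast at hj1 ⊢; omega) hj2
        have e2 : γ (j + d - 1) = (if m = 0 then 1 else 0) + γ (j - 1) := by
          rw [show j + d - 1 = (j - 1) + d from by ring]
          exact hper (j-1) (by push_cast at hj1 ⊢; omega) (by omega)
        have e3 : t (j + d) = 1 + t j := by
          have h3 := htt (j - r) (by simp only [Finset.mem_Icc]; push_cast at hj1 ⊢; omega)
          rw [show s + (j - r) = j + d from by omega, show r + (j - r) = j from by omega] at h3
          exact h3
        have e4 : t (j + d + (n:ℤ) + 2) = 1 + t (j + (n:ℤ) + 2) := by
          have h4 := htt (j + (n:ℤ) + 2 - r)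
            (by simp only [Finset.mem_Icc]; push_cast at hj1 ⊢; omega)
          rw [show s + (j + (n:ℤ) + 2 - r) = j + d + (n:ℤ) + 2 from by omega,
            show r + (j + (n:ℤ) + 2 - r) = j + (n:ℤ) + 2 from by omega] at h4
          exact h4
        simp only [hγ']
        rw [e1, e2, e3, e4]
        ring_nf
  obtain ⟨γ, hfun, hsup1, hsup2, hper⟩ := key m hm2
  rw [hf, hfun]
  beta_reduce
  have hkm2 : 2 ≤ k - m := by omega
  have hc : ((k - m : ℕ):ℤ) = (k:ℤ) - (m:ℤ) := by omega
  have hts : t s = t r + 1 := by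
    have h0 := htt 0 (by simp only [Finset.mem_Icc]; omega)
    simp only [add_zero] at h0
    linarith
  have vanishR : ∀ j ∈ Finset.Icc A B, j ∉ Finset.Icc (r - (k:ℤ) + 1 + m) (r - 1) →
      γ j * Bspl t (k - m) j (t r) = 0 := by
    intro j hj hj'
    simp only [Finset.mem_Icc] at hj hj'
    rcases lt_or_ge j (r - (k:ℤ) + 1 + m) with hlt | hge
    · rw [bspl_zero_of_ge ht (k-m) j (t r) (ht.monotone (by omega))]; ring
    · rcases (show r ≤ j from by omega).lt_or_eq with hgt | hgt
      · rw [bspl_zero_of_lt ht (k-m) j (t r) (ht hgt)]; ring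
      · rw [← hgt, bspl_left_knot ht (k-m) hkm2 r]; ring
  have vanishS : ∀ j ∈ Finset.Icc A B, j ∉ Finset.Icc (s - (k:ℤ) + 1 + m) (s - 1) →
      γ j * Bspl t (k - m) j (t s) = 0 := by
    intro j hj hj'
    simp only [Finset.mem_Icc] at hj hj'
    rcases lt_or_ge j (s - (k:ℤ) + 1 + m) with hlt | hge
    · rw [bspl_zero_of_ge ht (k-m) j (t s) (ht.monotone (by omega))]; ring
    · rcases (show s ≤ j from by omega).lt_or_eq with hgt | hgt
      · rw [bspl_zero_of_lt ht (k-m) j (t s) (ht hgt)]; ring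
      · rw [← hgt, bspl_left_knot ht (k-m) hkm2 s]; ring
  have redR := (Finset.sum_subset
    (by intro j hj; simp only [Finset.mem_Icc] at hj ⊢; omega) vanishR)
  have redS := (Finset.sum_subset
    (by intro j hj; simp only [Finset.mem_Icc] at hj ⊢; omega) vanishS)
  rw [← redR, ← redS]
  have hmap : Finset.Icc (s - (k:ℤ) + 1 + m) (s - 1)
      = (Finset.Icc (r - (k:ℤ) + 1 + m) (r - 1)).map (addRightEmbedding d) := by
    rw [Finset.map_add_right_Icc]
    congr 1 <;> omega
  rw [hmap, Finset.sum_map]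
  apply Finset.sum_congr rfl
  intro j hj
  simp only [Finset.mem_Icc] at hj
  simp only [addRightEmbedding_apply]
  have hγeq : γ (j + d) = γ j := by
    rw [hper j (by omega) (by omega), if_neg (by omega), zero_add]
  rw [hγeq, hts]
  congr 1
  symm
  apply bspl_shift (k - m) j (j + d)
  intro a ha1 ha2
  have h5 := htt (j + a - r) (by simp only [Finset.mem_Icc]; push_cast at ha2 ⊢; omega)
  rw [show s + (j + a - r) = j + d + a from by omega,
    show r + (j + a - r) = j + a from by omega] at h5
  exact h5
end
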